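/- arXiv:1407.6258 — 5 statements merged into one kernel-verified Lean document; each statement's English description precedes it below -/
import Mathlib

section
/- For every n ≥ 1, the ℚ-vector space (under pointwise operations) of stable x-families f = (f_{2m+1})_{m≥0} satisfying equation (E_x) and such that every f_{2m+1} is homogeneous of degree n has dimension at most 2^{n−1}. -/
open MvPolynomial
open scoped Classical

noncomputable section

/-- The order condition for a function `r : α → Fin N` (labels `0,…,N-1` standing for
`1,…,N`) with respect to a rank function `ht` on the poset `α`. -/
def OrderCond {α : Type} [PartialOrder α] (ht : α → ℕ) {N : ℕ} (r : α → Fin N) : Prop :=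
  (∀ x y : α, x ≤ y → r x ≤ r y) ∧ ∀ x y : α, x < y → Odd (ht x) → r x < r y

/-- `ht` is a rank function on the poset `α`: minimal elements have height `0` and
covering relations increase the height by exactly one. -/
def IsRanked {α : Type} [PartialOrder α] (ht : α → ℕ) : Prop :=
  (∀ x : α, IsMin x → ht x = 0) ∧ ∀ x y : α, x ⋖ y → ht y = ht x + 1

/-- The polynomial `N_P^(m)`, an element of `ℚ[p₁,…,p_{m+1},q₁,…,q_m]`;
the variable `Sum.inl j` is `p_{j+1}` and `Sum.inr j` is `q_{j+1}` (0-indexed). -/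
def NP (α : Type) [Fintype α] [PartialOrder α] (ht : α → ℕ) (m : ℕ) :
    MvPolynomial (ℕ ⊕ ℕ) ℚ :=
  ∑ r : α → Fin (m + 1),
    if OrderCond ht r ∧ ∀ v, Odd (ht v) → (r v : ℕ) < m then
      ∏ v : α, if Even (ht v) then X (Sum.inl (r v : ℕ)) else X (Sum.inr (r v : ℕ))
    else 0

/-- The polynomial `F_P^(N)`, an element of `ℚ[x₁,…,x_N]`; variable `j` is `x_{j+1}`. -/
def FP (α : Type) [Fintype α] [PartialOrder α] (ht : α → ℕ) (N : ℕ) :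
    MvPolynomial ℕ ℚ :=
  ∑ r : α → Fin N, if OrderCond ht r then ∏ v : α, X (r v : ℕ) else 0

/-- A stable x-family `(f_{2m+1})_{m ≥ 0}`: `f m` stands for `f_{2m+1} ∈ ℚ[x₁,…,x_{2m+1}]`
(variable `k` is `x_{k+1}`), with `f_{2m+3}(x₁,…,x_{2m+1},0,0) = f_{2m+1}`. -/
def IsStableX (f : ℕ → MvPolynomial ℕ ℚ) : Prop :=
  (∀ m, (f m).vars ⊆ Finset.range (2 * m + 1)) ∧
  ∀ m, aeval (fun k => if k < 2 * m + 1 then (X k : MvPolynomial ℕ ℚ) else 0) (f (m + 1)) = f m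

/-- Equation (E_x): for all (paper) `m ≥ 1` and `1 ≤ i ≤ 2m`, substituting `x_{i+1} := x_i`
in `f_{2m+1}` yields `f_{2m-1}(x₁,…,x_{i-1},x_{i+2},…,x_{2m+1})`.  Here `m, i` are 0-indexed:
`f (m+1)` is `f_{2m+3}` and the Lean variable `i` is the paper variable `i+1`. -/
def SatisfiesEx (f : ℕ → MvPolynomial ℕ ℚ) : Prop :=
  ∀ m i : ℕ, i < 2 * m + 2 →
    aeval (fun k => if k = i + 1 then (X i : MvPolynomial ℕ ℚ) else X k) (f (m + 1)) =
    aeval (fun k => if k < i then (X k : MvPolynomial ℕ ℚ) else X (k + 2)) (f m)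

/-- A stable pq-family `(h_m)_{m ≥ 0}` with `h m ∈ ℚ[p₁,…,p_{m+1},q₁,…,q_m]`
(`Sum.inl j` is `p_{j+1}`, `Sum.inr j` is `q_{j+1}`), such that substituting
`p_{m+2} := 0` and `q_{m+1} := 0` in `h (m+1)` yields `h m`. -/
def IsStablePQ (h : ℕ → MvPolynomial (ℕ ⊕ ℕ) ℚ) : Prop :=
  (∀ m, (h m).vars ⊆ (Finset.range (m + 1)).image Sum.inl ∪ (Finset.range m).image Sum.inr) ∧
  ∀ m, aeval (Sum.elim
      (fun j => if j = m + 1 then 0 else (X (Sum.inl j) : MvPolynomial (ℕ ⊕ ℕ) ℚ))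
      (fun j => if j = m then 0 else X (Sum.inr j))) (h (m + 1)) = h m

/-- Equations (E_pq) for a pq-family; the Lean index `i ≤ m` is the paper index `i+1 ≤ m+1`
and `h (m+1)`, `h m` are the paper `h_m`, `h_{m-1}`.  The first equation sets `q_{i+1} := 0`,
the second sets `p_{i+1} := 0`. -/
def SatisfiesEpq (h : ℕ → MvPolynomial (ℕ ⊕ ℕ) ℚ) : Prop :=
  ∀ m i : ℕ, i ≤ m →
    (aeval (Sum.elim (fun j => (X (Sum.inl j) : MvPolynomial (ℕ ⊕ ℕ) ℚ))
        (fun j => if j = i then 0 else X (Sum.inr j))) (h (m + 1)) =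
      aeval (Sum.elim
        (fun j => if j < i then (X (Sum.inl j) : MvPolynomial (ℕ ⊕ ℕ) ℚ)
          else if j = i then X (Sum.inl i) + X (Sum.inl (i + 1)) else X (Sum.inl (j + 1)))
        (fun j => if j < i then X (Sum.inr j) else X (Sum.inr (j + 1)))) (h m)) ∧
    (aeval (Sum.elim (fun j => if j = i then 0 else (X (Sum.inl j) : MvPolynomial (ℕ ⊕ ℕ) ℚ))
        (fun j => X (Sum.inr j))) (h (m + 1)) =
      aeval (Sum.elim
        (fun j => if j < i then (X (Sum.inl j) : MvPolynomial (ℕ ⊕ ℕ) ℚ)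
          else X (Sum.inl (j + 1)))
        (fun j => if j + 1 < i then X (Sum.inr j)
          else if j + 1 = i then X (Sum.inr j) + X (Sum.inr (j + 1))
          else X (Sum.inr (j + 1)))) (h m))

/-- The inverse substitution of (⋆): the x-variable of (0-indexed) Lean index `k`
(paper `x_{k+1}`) expressed in the `p`/`q` variables:
`x_{2i+1} = q_{i+1}+⋯+q_m+p_{i+1}+⋯+p_{m+1}` and `x_{2i} = q_i+⋯+q_m+p_{i+1}+⋯+p_{m+1}`. -/
def xToPQ (m k : ℕ) : MvPolynomial (ℕ ⊕ ℕ) ℚ :=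
  if k % 2 = 0 then
    (∑ j ∈ Finset.Ico (k / 2) m, X (Sum.inr j)) + ∑ j ∈ Finset.Ico (k / 2) (m + 1), X (Sum.inl j)
  else
    (∑ j ∈ Finset.Ico (k / 2) m, X (Sum.inr j)) +
      ∑ j ∈ Finset.Ico (k / 2 + 1) (m + 1), X (Sum.inl j)

/-- The substitution (⋆): `p_i := x_{2i-1} - x_{2i}` (`1 ≤ i ≤ m`),
`q_i := x_{2i} - x_{2i+1}` (`1 ≤ i ≤ m`), `p_{m+1} := x_{2m+1}` (all 0-indexed in Lean). -/
def pqToX (m : ℕ) : ℕ ⊕ ℕ → MvPolynomial ℕ ℚ :=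
  Sum.elim (fun j => if j = m then X (2 * m) else X (2 * j) - X (2 * j + 1))
    (fun j => X (2 * j + 1) - X (2 * j + 2))

/-- The substitution sending every odd-indexed (paper) variable `x_{2i+1}` to `0`
and `x_{2i}` to `y_i` (Lean variable `i-1`). -/
def oddZero : ℕ → MvPolynomial ℕ ℚ := fun k => if k % 2 = 0 then 0 else X (k / 2)

/-- A quasi-symmetric stable family `(g_m)_{m≥0}` with `g m ∈ ℚ[y₁,…,y_m]`
(variable `k` is `y_{k+1}`): `g_{m+1}(y₁,…,y_m,0) = g_m`, and the coefficient of
`y_{a₁}^{c₁}⋯y_{a_r}^{c_r}` (for `a₁ < ⋯ < a_r ≤ m`, `c_j > 0`) equals the coefficient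
of `y₁^{c₁}⋯y_r^{c_r}`. -/
def IsQSymStable (g : ℕ → MvPolynomial ℕ ℚ) : Prop :=
  (∀ m, (g m).vars ⊆ Finset.range m) ∧
  (∀ m, aeval (fun k => if k = m then 0 else (X k : MvPolynomial ℕ ℚ)) (g (m + 1)) = g m) ∧
  ∀ (m r : ℕ) (a c : Fin r → ℕ), StrictMono a → (∀ j, a j < m) → (∀ j, 0 < c j) →
    coeff (∑ j, Finsupp.single (a j) (c j)) (g m) =
    coeff (∑ j : Fin r, Finsupp.single (j : ℕ) (c j)) (g m)

namespace Stmt8Proof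
open Finsupp




/-- The shift map: `k ↦ k` for `k < i`, `k ↦ k+2` for `k ≥ i`. -/
def sh (i : ℕ) : ℕ → ℕ := fun k => if k < i then k else k + 2

lemma sh_inj (i : ℕ) : Function.Injective (sh i) := by
  intro a b h; unfold sh at h; split_ifs at h <;> omega

lemma sh_range (i x : ℕ) : x ∈ Set.range (sh i) ↔ x ≠ i ∧ x ≠ i + 1 := by
  constructor
  · rintro ⟨k, rfl⟩; unfold sh; split_ifs <;> omega
  · rintro ⟨h1, h2⟩
    rcases lt_or_ge x i with h | h
    · exact ⟨x, by simp [sh, h]⟩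
    · refine ⟨x - 2, ?_⟩; unfold sh; split_ifs <;> omega

/-- The merge map: `i+1 ↦ i`, everything else fixed. -/
def mg (i : ℕ) : ℕ → ℕ := fun k => if k = i + 1 then i else k

lemma mapDomain_mg (i : ℕ) (d : ℕ →₀ ℕ) :
    mapDomain (mg i) d = (d.erase (i+1)) + single i (d (i+1)) := by
  conv_lhs => rw [← Finsupp.erase_add_single (i+1) d]
  rw [mapDomain_add, mapDomain_single]
  congr 1
  · have h : ∀ x ∈ (d.erase (i+1)).support, mg i x = id x := by
      intro x hx
      have hx1 : x ≠ i + 1 := by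
        rintro rfl
        simp [Finsupp.mem_support_iff, Finsupp.erase_same] at hx
      simp [mg, hx1]
    rw [mapDomain_congr h, mapDomain_id]
  · simp [mg]

lemma coeff_rename_sum (g : ℕ → ℕ) (P : MvPolynomial ℕ ℚ) (μ : ℕ →₀ ℕ)
    (T : Finset (ℕ →₀ ℕ)) (hchar : ∀ d, mapDomain g d = μ ↔ d ∈ T) :
    MvPolynomial.coeff μ (MvPolynomial.rename g P) = ∑ d ∈ T, MvPolynomial.coeff d P := by
  conv_lhs => rw [P.as_sum]
  rw [map_sum, MvPolynomial.coeff_sum]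
  have h1 : ∀ d ∈ P.support, MvPolynomial.coeff μ
        (MvPolynomial.rename g (MvPolynomial.monomial d (MvPolynomial.coeff d P)))
      = if d ∈ T then MvPolynomial.coeff d P else 0 := by
    intro d _
    rw [MvPolynomial.rename_monomial, MvPolynomial.coeff_monomial]
    by_cases h : mapDomain g d = μ
    · rw [if_pos h, if_pos ((hchar d).1 h)]
    · rw [if_neg h, if_neg (fun hT => h ((hchar d).2 hT))]
  rw [Finset.sum_congr rfl h1, Finset.sum_ite_mem]
  apply Finset.sum_subset Finset.inter_subset_right
  intro d hdT hdn
  have : d ∉ P.support := fun hs => hdn (Finset.mem_inter.2 ⟨hs, hdT⟩)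
  simpa [MvPolynomial.mem_support_iff] using this

lemma coeff_aeval_trunc (N : ℕ) (P : MvPolynomial ℕ ℚ) (d : ℕ →₀ ℕ)
    (hd : ∀ k ∈ d.support, k < N) :
    MvPolynomial.coeff d
      (MvPolynomial.aeval (fun k => if k < N then (MvPolynomial.X k : MvPolynomial ℕ ℚ) else 0) P)
      = MvPolynomial.coeff d P := by
  set g : ℕ → MvPolynomial ℕ ℚ := fun k => if k < N then MvPolynomial.X k else 0 with hg
  conv_lhs => rw [P.as_sum]
  rw [map_sum, MvPolynomial.coeff_sum]
  have h1 : ∀ e : ℕ →₀ ℕ, MvPolynomial.aeval g (MvPolynomial.monomial e (MvPolynomial.coeff e P))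
      = if (∀ k ∈ e.support, k < N) then MvPolynomial.monomial e (MvPolynomial.coeff e P) else 0 := by
    intro e
    rw [MvPolynomial.aeval_monomial]
    by_cases he : ∀ k ∈ e.support, k < N
    · rw [if_pos he]
      have hprod : (e.prod fun k v => g k ^ v)
          = e.prod fun k v => (MvPolynomial.X k : MvPolynomial ℕ ℚ) ^ v :=
        Finsupp.prod_congr fun k hk => by rw [hg]; simp [he k hk]
      rw [hprod, MvPolynomial.algebraMap_eq, ← MvPolynomial.monomial_eq]
    · rw [if_neg he]
      push_neg at he
      obtain ⟨k0, hk0, hk0N⟩ := he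
      have hzero : (e.prod fun k v => g k ^ v) = 0 := by
        apply Finset.prod_eq_zero hk0
        rw [hg]
        simp only [if_neg (by omega : ¬ k0 < N)]
        exact zero_pow (by simpa using hk0)
      rw [hzero, mul_zero]
  have h2 : ∀ e ∈ P.support, MvPolynomial.coeff d
        (if (∀ k ∈ e.support, k < N) then MvPolynomial.monomial e (MvPolynomial.coeff e P) else 0)
      = if e = d then MvPolynomial.coeff e P else 0 := by
    intro e _
    by_cases hc : ∀ k ∈ e.support, k < N
    · rw [if_pos hc, MvPolynomial.coeff_monomial]
    · have hne : e ≠ d := by rintro rfl; exact hc hd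
      rw [if_neg hc, MvPolynomial.coeff_zero, if_neg hne]
  calc ∑ e ∈ P.support,
        MvPolynomial.coeff d (MvPolynomial.aeval g (MvPolynomial.monomial e (MvPolynomial.coeff e P)))
      = ∑ e ∈ P.support, if e = d then MvPolynomial.coeff e P else 0 := by
        refine Finset.sum_congr rfl fun e he => ?_
        rw [h1 e]; exact h2 e he
    _ = MvPolynomial.coeff d P := by
        rw [Finset.sum_ite_eq' P.support d (fun e => MvPolynomial.coeff e P)]
        by_cases hdP : d ∈ P.support
        · rw [if_pos hdP]
        · rw [if_neg hdP, eq_comm, ← MvPolynomial.notMem_support_iff]; exact hdP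





/-- The stabilized coefficient of a stable family. -/
def Cf (f : ℕ → MvPolynomial ℕ ℚ) (d : ℕ →₀ ℕ) : ℚ :=
  coeff d (f (d.support.sup id + 1))

section Family

variable {f : ℕ → MvPolynomial ℕ ℚ} (hst : IsStableX f) (hEx : SatisfiesEx f)

include hst in
lemma coeff_step (m : ℕ) (d : ℕ →₀ ℕ) (hd : ∀ k ∈ d.support, k < 2*m+1) :
    coeff d (f m) = coeff d (f (m+1)) := by
  conv_lhs => rw [← hst.2 m]
  exact coeff_aeval_trunc (2*m+1) (f (m+1)) d hd

include hst in
lemma coeff_chain (d : ℕ →₀ ℕ) (m m' : ℕ) (h : m ≤ m') (hd : ∀ k ∈ d.support, k < 2*m+1) :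
    coeff d (f m) = coeff d (f m') := by
  induction m', h using Nat.le_induction with
  | base => rfl
  | succ m' hm ih =>
      rw [ih, coeff_step hst m' d (fun k hk => by have := hd k hk; omega)]

include hst in
lemma Cf_spec (d : ℕ →₀ ℕ) (m : ℕ) (hd : ∀ k ∈ d.support, k < 2*m+1) :
    coeff d (f m) = Cf f d := by
  set L := d.support.sup id + 1 with hL
  have hdL : ∀ k ∈ d.support, k < 2*L+1 := by
    intro k hk
    have : id k ≤ d.support.sup id := Finset.le_sup hk
    simp only [id] at this; omega
  rcases le_total m L with h | h
  · rw [coeff_chain hst d m L h hd]; rfl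
  · rw [Cf, ← coeff_chain hst d L m h hdL]

include hEx in
lemma Ex_rename (m i : ℕ) (hi : i < 2*m+2) :
    rename (mg i) (f (m+1)) = rename (sh i) (f m) := by
  have h1 : (fun k => if k = i + 1 then (X i : MvPolynomial ℕ ℚ) else X k)
      = fun k => X (mg i k) := by
    funext k; unfold mg; split_ifs <;> rfl
  have h2 : (fun k => if k < i then (X k : MvPolynomial ℕ ℚ) else X (k+2))
      = fun k => X (sh i k) := by
    funext k; unfold sh; split_ifs <;> rfl
  have key := hEx m i hi
  rw [h1, h2] at key
  rw [rename_eq_aeval, rename_eq_aeval]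
  exact key

include hst hEx in
/-- Deletion of a zero pair: `C(mapDomain (sh i) c) = C c`. -/
lemma Cf_shift (i : ℕ) (c : ℕ →₀ ℕ) : Cf f (mapDomain (sh i) c) = Cf f c := by
  set m := c.support.sup id + i + 1 with hm
  set μ := mapDomain (sh i) c with hμ
  have hμsupp : ∀ k ∈ μ.support, k ≤ c.support.sup id + 2 := by
    intro k hk
    have hk2 := Finsupp.mapDomain_support hk
    rw [Finset.mem_image] at hk2
    obtain ⟨a, ha, rfl⟩ := hk2
    have : id a ≤ c.support.sup id := Finset.le_sup ha
    simp only [id] at this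
    unfold sh; split_ifs <;> omega
  have hμi : μ i = 0 := mapDomain_notin_range _ _ (by rw [sh_range]; omega)
  have hμi1 : μ (i+1) = 0 := mapDomain_notin_range _ _ (by rw [sh_range]; omega)
  have key := Ex_rename hEx m i (by omega)
  have hchar : ∀ d, mapDomain (mg i) d = μ ↔ d ∈ ({μ} : Finset (ℕ →₀ ℕ)) := by
    intro d
    rw [Finset.mem_singleton, mapDomain_mg]
    constructor
    · intro h
      have hi0 : d i + d (i+1) = 0 := by
        have := DFunLike.congr_fun h i
        simpa [Finsupp.add_apply, Finsupp.erase_ne (show i ≠ i+1 by omega),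
          Finsupp.single_apply, hμi] using this
      have hd1 : d (i+1) = 0 := by omega
      have her : Finsupp.erase (i+1) d = d := by
        ext k
        by_cases hk : k = i+1
        · subst hk; rw [Finsupp.erase_same, hd1]
        · rw [Finsupp.erase_ne hk]
      rw [← h, her, hd1, single_zero, add_zero]
    · rintro rfl
      rw [hμi1, single_zero, add_zero]
      ext k
      by_cases hki1 : k = i+1
      · subst hki1; rw [Finsupp.erase_same, hμi1]
      · rw [Finsupp.erase_ne hki1]
  have hL := coeff_rename_sum (mg i) (f (m+1)) μ {μ} hchar
  rw [key, Finset.sum_singleton] at hL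
  rw [MvPolynomial.coeff_rename_mapDomain (sh i) (sh_inj i)] at hL
  -- hL : coeff c (f m) = coeff μ (f (m+1))
  have e1 : coeff c (f m) = Cf f c := by
    apply Cf_spec hst
    intro k hk
    have : id k ≤ c.support.sup id := Finset.le_sup hk
    simp only [id] at this; omega
  have e2 : coeff μ (f (m+1)) = Cf f μ := by
    apply Cf_spec hst
    intro k hk
    have := hμsupp k hk; omega
  rw [← e2, ← hL, e1]

include hst hEx in
/-- The split relation coming from (E_x). -/
lemma Cf_split (i D : ℕ) (hD : 0 < D) (u : ℕ →₀ ℕ) (hui : u i = 0) (hui1 : u (i+1) = 0) :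
    ∑ s ∈ Finset.range (D+1), Cf f (u + single i s + single (i+1) (D - s)) = 0 := by
  set m := u.support.sup id + i + D + 1 with hm
  set μ := u + single i D with hμ
  have hμi : μ i = D := by
    simp [hμ, Finsupp.add_apply, Finsupp.single_apply, hui]
  have hμk : ∀ k, k ≠ i → μ k = u k := by
    intro k hk
    rw [hμ, Finsupp.add_apply, Finsupp.single_apply,
      if_neg (fun hh => hk hh.symm), add_zero]
  have key := Ex_rename hEx m i (by omega)
  have hR : coeff μ (rename (sh i) (f m)) = 0 := by
    apply coeff_rename_eq_zero
    intro e he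
    exfalso
    have h2 : (mapDomain (sh i) e) i = 0 :=
      mapDomain_notin_range _ _ (by rw [sh_range]; omega)
    rw [he, hμi] at h2
    omega
  set dd : ℕ → (ℕ →₀ ℕ) := fun s => u + single i s + single (i+1) (D - s) with hdd
  have hdds : ∀ s, dd s i = s := by
    intro s
    show (u + single i s + single (i+1) (D-s)) i = s
    rw [Finsupp.add_apply, Finsupp.add_apply, hui, Finsupp.single_apply, if_pos rfl,
      Finsupp.single_apply, if_neg (show ¬ i + 1 = i by omega)]
    omega
  have hdds1 : ∀ s, dd s (i+1) = D - s := by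
    intro s
    show (u + single i s + single (i+1) (D-s)) (i+1) = D - s
    rw [Finsupp.add_apply, Finsupp.add_apply, hui1, Finsupp.single_apply,
      if_neg (show ¬ i = i + 1 by omega), Finsupp.single_apply, if_pos rfl]
    omega
  have hddk : ∀ s k, k ≠ i → k ≠ i + 1 → dd s k = u k := by
    intro s k h1 h2
    show (u + single i s + single (i+1) (D-s)) k = u k
    rw [Finsupp.add_apply, Finsupp.add_apply, Finsupp.single_apply,
      if_neg (fun hh => h1 hh.symm), Finsupp.single_apply,
      if_neg (fun hh => h2 hh.symm), add_zero, add_zero]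
  set T := (Finset.range (D+1)).image dd with hT
  have hchar : ∀ d, mapDomain (mg i) d = μ ↔ d ∈ T := by
    intro d
    rw [mapDomain_mg]
    constructor
    · intro h
      have hsum : d i + d (i+1) = D := by
        have := DFunLike.congr_fun h i
        simpa [Finsupp.add_apply, Finsupp.erase_ne (show i ≠ i+1 by omega),
          Finsupp.single_apply, hμi] using this
      rw [hT, Finset.mem_image]
      refine ⟨d i, Finset.mem_range.2 (by omega), ?_⟩
      ext k
      by_cases hki : k = i
      · subst hki; rw [hdds]
      · by_cases hki1 : k = i+1
        · subst hki1; rw [hdds1]; omega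
        · rw [hddk _ _ hki hki1]
          have hk := DFunLike.congr_fun h k
          rw [Finsupp.add_apply, Finsupp.erase_ne hki1, Finsupp.single_apply,
            if_neg (fun hh => hki hh.symm), add_zero] at hk
          rw [hk, hμk k hki]
    · intro hd
      rw [hT, Finset.mem_image] at hd
      obtain ⟨s, hs, rfl⟩ := hd
      rw [Finset.mem_range] at hs
      have h1 : (dd s).erase (i+1) = u + single i s := by
        ext k
        by_cases hki1 : k = i+1
        · subst hki1
          rw [Finsupp.erase_same, Finsupp.add_apply, Finsupp.single_apply,
            if_neg (show ¬ i = i+1 by omega), hui1, add_zero]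
        · rw [Finsupp.erase_ne hki1]
          by_cases hki : k = i
          · subst hki
            rw [hdds, Finsupp.add_apply, hui, Finsupp.single_apply, if_pos rfl]
            omega
          · rw [hddk _ _ hki hki1, Finsupp.add_apply, Finsupp.single_apply,
              if_neg (fun hh => hki hh.symm), add_zero]
      rw [h1, hdds1, add_assoc, ← single_add, show s + (D - s) = D by omega]
  have hL := coeff_rename_sum (mg i) (f (m+1)) μ T hchar
  rw [key, hR] at hL
  have hinj : Set.InjOn dd (Finset.range (D+1)) := by
    intro a _ b _ hab
    have := DFunLike.congr_fun hab i
    rwa [hdds, hdds] at this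
  rw [hT, Finset.sum_image (fun a ha b hb h => hinj ha hb h)] at hL
  have hconv : ∀ s ∈ Finset.range (D+1), coeff (dd s) (f (m+1)) = Cf f (dd s) := by
    intro s hs
    rw [Finset.mem_range] at hs
    apply Cf_spec hst
    intro k hk
    rw [Finsupp.mem_support_iff] at hk
    by_cases hki : k = i
    · omega
    · by_cases hki1 : k = i + 1
      · omega
      · rw [hddk _ _ hki hki1] at hk
        have hk2 : k ∈ u.support := Finsupp.mem_support_iff.2 hk
        have : id k ≤ u.support.sup id := Finset.le_sup hk2
        simp only [id] at this; omega
  rw [Finset.sum_congr rfl hconv] at hL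
  exact hL.symm

end Family




/-- Total exponent on (Lean-)even positions. -/
def Ew (d : ℕ →₀ ℕ) : ℕ := d.sum fun k v => if k % 2 = 0 then v else 0

/-- Position-weighted total exponent. -/
def Wt (d : ℕ →₀ ℕ) : ℕ := d.sum fun k v => k * v

lemma Ew_add (a b : ℕ →₀ ℕ) : Ew (a + b) = Ew a + Ew b := by
  unfold Ew
  exact Finsupp.sum_add_index' (fun k => by split_ifs <;> rfl)
    (fun k v w => by split_ifs <;> simp)

lemma Ew_single (k v : ℕ) : Ew (single k v) = if k % 2 = 0 then v else 0 := by
  unfold Ew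
  rw [Finsupp.sum_single_index]
  split_ifs <;> rfl

lemma Ew_mapDomain_sh (i : ℕ) (c : ℕ →₀ ℕ) : Ew (mapDomain (sh i) c) = Ew c := by
  unfold Ew
  rw [Finsupp.sum_mapDomain_index (fun k => by split_ifs <;> rfl)
    (fun k v w => by split_ifs <;> simp)]
  apply Finsupp.sum_congr
  intro a _
  have : sh i a % 2 = a % 2 := by unfold sh; split_ifs <;> omega
  rw [this]

lemma Wt_mapDomain_sh (i : ℕ) (c : ℕ →₀ ℕ) :
    Wt (mapDomain (sh i) c) = Wt c + c.sum fun a v => if i ≤ a then 2*v else 0 := by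
  unfold Wt
  rw [Finsupp.sum_mapDomain_index (fun k => by simp) (fun k v w => by ring)]
  rw [← Finsupp.sum_add]
  apply Finsupp.sum_congr
  intro a _
  show sh i a * _ = _
  unfold sh
  by_cases hai : a < i
  · rw [if_pos hai, if_neg (by omega), add_zero]
  · rw [if_neg hai, if_pos (by omega)]; ring

lemma Ew_eq_zero_iff (d : ℕ →₀ ℕ) (h : Ew d = 0) : ∀ k ∈ d.support, k % 2 = 1 := by
  intro k hk
  unfold Ew at h
  rw [Finsupp.sum] at h
  rw [Finset.sum_eq_zero_iff] at h
  have := h k hk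
  rw [Finsupp.mem_support_iff] at hk
  by_contra hodd
  rw [if_pos (by omega)] at this
  exact hk this

/-- The canonical monomial attached to a composition. -/
def vecC {n : ℕ} (c : Composition n) : ℕ →₀ ℕ :=
  ∑ j ∈ Finset.range c.length, Finsupp.single (2*j+1) (c.blocks.getD j 0)

section Main

variable {n : ℕ} {f : ℕ → MvPolynomial ℕ ℚ} (hst : IsStableX f) (hEx : SatisfiesEx f)
  (hhom : ∀ m, (f m).IsHomogeneous n) (hn : 1 ≤ n)
  (hcomp : ∀ c : Composition n, coeff (vecC c) (f n) = 0)

include hst hEx hhom hn hcomp in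
theorem Cf_zero : ∀ w, ∀ d : ℕ →₀ ℕ, Ew d = w → Cf f d = 0 := by
  intro w
  induction w using Nat.strong_induction_on with
  | _ w IHw =>
  rcases Nat.eq_zero_or_pos w with rfl | hw
  · -- inner induction on Wt
    suffices H : ∀ W, ∀ d : ℕ →₀ ℕ, Wt d = W → Ew d = 0 → Cf f d = 0 by
      intro d hd; exact H (Wt d) d rfl hd
    intro W
    induction W using Nat.strong_induction_on with
    | _ W IHW =>
    intro d hWt hEw
    by_cases hd0 : d = 0
    · subst hd0
      unfold Cf
      apply (hhom _).coeff_eq_zero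
      rw [map_zero]
      omega
    · have hne : d.support.Nonempty := Finsupp.support_nonempty_iff.2 hd0
      set M := d.support.max' hne with hM
      have hMsupp : M ∈ d.support := Finset.max'_mem _ _
      have hodd := Ew_eq_zero_iff d hEw
      have hModd : M % 2 = 1 := hodd M hMsupp
      by_cases hcanon : ∀ j, 2*j+1 ≤ M → d (2*j+1) ≠ 0
      · -- canonical case
        by_cases hdeg : d.degree = n
        · -- build a composition
          set r := (M+1)/2 with hr
          have hM2 : M = 2*r - 1 ∧ 1 ≤ r := by omega
          have hsupp : d.support = (Finset.range r).image (fun j => 2*j+1) := by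
            ext k
            simp only [Finset.mem_image, Finset.mem_range]
            constructor
            · intro hk
              have h1 := hodd k hk
              have h2 : k ≤ M := Finset.le_max' _ _ hk
              exact ⟨k/2, by omega, by omega⟩
            · rintro ⟨j, hj, rfl⟩
              exact Finsupp.mem_support_iff.2 (hcanon j (by omega))
          have hsum : ∑ j ∈ Finset.range r, d (2*j+1) = n := by
            rw [← hdeg]
            rw [Finsupp.degree_apply]
            rw [hsupp, Finset.sum_image (by intro a _ b _ h; simp only at h; omega)]
          have hbsum : ((List.range r).map (fun j => d (2*j+1))).sum = n := by
            rw [show ((List.range r).map (fun j => d (2*j+1))).sum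
              = ∑ j ∈ Finset.range r, d (2*j+1) from rfl, hsum]
          set c : Composition n :=
            ⟨(List.range r).map (fun j => d (2*j+1)), by
              intro x hx
              rw [List.mem_map] at hx
              obtain ⟨j, hj, rfl⟩ := hx
              rw [List.mem_range] at hj
              exact Nat.pos_of_ne_zero (hcanon j (by omega)), hbsum⟩ with hc
          have hlen : c.length = r := by
            simp [hc, Composition.length]
          have hblock : ∀ j < r, c.blocks.getD j 0 = d (2*j+1) := by
            intro j hj
            have hjl : j < c.blocks.length := by
              simp [hc]; omega
            rw [List.getD_eq_getElem c.blocks 0 hjl]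
            simp [hc]
          have hvec : vecC c = d := by
            unfold vecC
            rw [hlen]
            ext k
            rw [Finsupp.finset_sum_apply]
            by_cases hk : k ∈ d.support
            · rw [hsupp, Finset.mem_image] at hk
              obtain ⟨j0, hj0, rfl⟩ := hk
              rw [Finset.mem_range] at hj0
              rw [Finset.sum_eq_single j0]
              · rw [Finsupp.single_apply, if_pos rfl, hblock j0 hj0]
              · intro j hj hne2
                rw [Finsupp.single_apply, if_neg (by omega)]
              · intro h; exact absurd (Finset.mem_range.2 hj0) h
            · have hdk : d k = 0 := Finsupp.notMem_support_iff.1 hk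
              rw [hdk]
              apply Finset.sum_eq_zero
              intro j hj
              rw [Finset.mem_range] at hj
              rw [Finsupp.single_apply, if_neg ?_]
              intro hkj
              apply hk
              rw [hsupp, Finset.mem_image]
              exact ⟨j, Finset.mem_range.2 hj, hkj⟩
          -- r ≤ n
          have hrn : r ≤ n := by
            calc r = ∑ j ∈ Finset.range r, 1 := by simp
            _ ≤ ∑ j ∈ Finset.range r, d (2*j+1) := by
                apply Finset.sum_le_sum
                intro j hj
                rw [Finset.mem_range] at hj
                exact Nat.one_le_iff_ne_zero.2 (hcanon j (by omega))
            _ = n := hsum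
          have hfit : ∀ k ∈ d.support, k < 2*n+1 := by
            intro k hk
            have : k ≤ M := Finset.le_max' _ _ hk
            omega
          rw [← Cf_spec hst d n hfit, ← hvec]
          exact hcomp c
        · unfold Cf
          exact (hhom _).coeff_eq_zero hdeg
      · -- non-canonical: delete a zero pair
        push_neg at hcanon
        obtain ⟨j, hjM, hdj⟩ := hcanon
        set k := 2*j with hk
        have hdk : d k = 0 := by
          by_contra h
          have := hodd k (Finsupp.mem_support_iff.2 h)
          omega
        have hdk1 : d (k+1) = 0 := hdj
        have hMk : M ≥ k + 2 := by
          have : M ≠ 2*j+1 := by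
            intro h
            rw [← h] at hdj
            exact (Finsupp.mem_support_iff.1 hMsupp) hdj
          omega
        have hsupp_range : ∀ x ∈ d.support, x ∈ Set.range (sh k) := by
          intro x hx
          rw [sh_range]
          rw [Finsupp.mem_support_iff] at hx
          constructor
          · intro h; rw [h] at hx; exact hx hdk
          · intro h; rw [h] at hx; exact hx hdk1
        set c' := comapDomain (sh k) d ((sh_inj k).injOn) with hc'
        have hmc : mapDomain (sh k) c' = d := by
          rw [hc']
          exact mapDomain_comapDomain (sh k) (sh_inj k) d (fun x hx => hsupp_range x hx)
        have h1 : Cf f d = Cf f c' := by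
          rw [← hmc]
          exact Cf_shift hst hEx k c'
        have hEwc : Ew c' = 0 := by
          have := Ew_mapDomain_sh k c'
          rw [hmc] at this
          omega
        have hc'M : c' (M - 2) = d M := by
          rw [hc', Finsupp.comapDomain_apply]
          congr 1
          unfold sh
          rw [if_neg (by omega)]
          omega
        have hWtc : Wt c' < W := by
          have hW2 := Wt_mapDomain_sh k c'
          rw [hmc, hWt] at hW2
          have hterm : 0 < c'.sum fun a v => if k ≤ a then 2*v else 0 := by
            have hmem : M - 2 ∈ c'.support := by
              rw [Finsupp.mem_support_iff, hc'M]
              exact Finsupp.mem_support_iff.1 hMsupp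
            rw [Finsupp.sum]
            apply Finset.sum_pos'
            · intro a _; positivity
            · refine ⟨M - 2, hmem, ?_⟩
              rw [if_pos (by omega)]
              have := Finsupp.mem_support_iff.1 hmem
              omega
          omega
        rw [h1]
        exact IHW (Wt c') hWtc c' rfl hEwc
  · -- Ew d = w > 0
    intro d hEwd
    have hexists : ∃ i ∈ d.support, i % 2 = 0 := by
      by_contra h
      push_neg at h
      have : Ew d = 0 := by
        unfold Ew
        rw [Finsupp.sum]
        apply Finset.sum_eq_zero
        intro x hx
        rw [if_neg (h x hx)]
      omega
    obtain ⟨i, hisupp, hieven⟩ := hexists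
    set D := d i with hD
    have hDpos : 0 < D := Nat.pos_of_ne_zero (Finsupp.mem_support_iff.1 hisupp)
    set d' := mapDomain (sh (i+1)) d with hd'
    have h1 : Cf f d' = Cf f d := by
      rw [hd']
      exact Cf_shift hst hEx (i+1) d
    have hshi : sh (i+1) i = i := by unfold sh; rw [if_pos (by omega)]
    have hd'i : d' i = D := by
      have h2 := Finsupp.mapDomain_apply (sh_inj (i+1)) d i
      rw [hshi] at h2
      rw [hd', h2]
    have hd'i1 : d' (i+1) = 0 := by
      rw [hd']
      exact mapDomain_notin_range _ _ (by rw [sh_range]; omega)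
    set u := d'.erase i with hu
    have hui : u i = 0 := Finsupp.erase_same
    have hui1 : u (i+1) = 0 := by
      rw [hu, Finsupp.erase_ne (by omega)]
      exact hd'i1
    have hud : u + single i D = d' := by
      rw [hu, ← hd'i]
      exact Finsupp.erase_add_single i d'
    have hsplit := Cf_split hst hEx i D hDpos u hui hui1
    rw [Finset.sum_range_succ] at hsplit
    have hlast : u + single i D + single (i+1) (D - D) = d' := by
      rw [Nat.sub_self, single_zero, add_zero, hud]
    rw [hlast] at hsplit
    have hEwd' : Ew d' = w := by
      rw [hd', Ew_mapDomain_sh, hEwd]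
    have hEwu : Ew u + D = w := by
      have h2 : Ew (u + single i D) = Ew d' := by rw [hud]
      rw [Ew_add, Ew_single, if_pos hieven, hEwd'] at h2
      exact h2
    have hzero : ∀ s ∈ Finset.range D, Cf f (u + single i s + single (i+1) (D - s)) = 0 := by
      intro s hs
      rw [Finset.mem_range] at hs
      apply IHw (Ew u + s) (by omega)
      rw [Ew_add, Ew_add, Ew_single, Ew_single, if_pos hieven,
        if_neg (by omega : ¬ (i+1) % 2 = 0), add_zero]
    rw [Finset.sum_eq_zero hzero, zero_add] at hsplit
    rw [← h1]
    exact hsplit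

include hst in
theorem family_zero (hfz : ∀ d : ℕ →₀ ℕ, Cf f d = 0) (m : ℕ) : f m = 0 := by
  ext d
  rw [coeff_zero]
  by_cases hd : ∀ k ∈ d.support, k < 2*m+1
  · rw [Cf_spec hst d m hd]
    exact hfz d
  · push_neg at hd
    obtain ⟨k, hk, hkm⟩ := hd
    by_contra hne
    have hv : k ∈ (f m).vars := (mem_vars k).2 ⟨d, MvPolynomial.mem_support_iff.2 hne, hk⟩
    have := hst.1 m hv
    rw [Finset.mem_range] at this
    omega

end Main

end Stmt8Proof

namespace Stmt8Proof
open Finsupp MvPolynomial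

lemma homog_smul {p : MvPolynomial ℕ ℚ} {n : ℕ} (c : ℚ) (hp : p.IsHomogeneous n) :
    (c • p).IsHomogeneous n := by
  intro d hd
  apply hp
  rw [coeff_smul] at hd
  exact fun h0 => hd (by rw [h0, smul_zero])

lemma vars_smul_sub {p : MvPolynomial ℕ ℚ} (c : ℚ) : (c • p).vars ⊆ p.vars := by
  intro x hx
  rw [mem_vars] at hx ⊢
  obtain ⟨d, hd, hxd⟩ := hx
  exact ⟨d, MvPolynomial.support_smul hd, hxd⟩

/-- The submodule of stable x-families satisfying (E_x), homogeneous of degree `n`. -/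
def Wmod (n : ℕ) : Submodule ℚ (ℕ → MvPolynomial ℕ ℚ) where
  carrier := {f | IsStableX f ∧ SatisfiesEx f ∧ ∀ m, (f m).IsHomogeneous n}
  add_mem' := by
    rintro f g ⟨⟨hfv, hfs⟩, hfe, hfh⟩ ⟨⟨hgv, hgs⟩, hge, hgh⟩
    refine ⟨⟨?_, ?_⟩, ?_, ?_⟩
    · intro m
      refine (MvPolynomial.vars_add_subset (f m) (g m)).trans ?_
      exact Finset.union_subset (hfv m) (hgv m)
    · intro m
      show aeval _ (f (m+1) + g (m+1)) = f m + g m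
      rw [map_add, hfs m, hgs m]
    · intro m i hi
      show aeval _ (f (m+1) + g (m+1)) = aeval _ (f m + g m)
      rw [map_add, map_add, hfe m i hi, hge m i hi]
    · intro m
      exact (hfh m).add (hgh m)
  zero_mem' := by
    refine ⟨⟨?_, ?_⟩, ?_, ?_⟩
    · intro m; show ((0 : MvPolynomial ℕ ℚ)).vars ⊆ _
      rw [MvPolynomial.vars_0]; exact Finset.empty_subset _
    · intro m; show aeval _ (0 : MvPolynomial ℕ ℚ) = 0; rw [map_zero]
    · intro m i _; show aeval _ (0 : MvPolynomial ℕ ℚ) = aeval _ (0 : MvPolynomial ℕ ℚ)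
      rw [map_zero, map_zero]
    · intro m; exact isHomogeneous_zero ℕ ℚ n
  smul_mem' := by
    rintro c f ⟨⟨hfv, hfs⟩, hfe, hfh⟩
    refine ⟨⟨?_, ?_⟩, ?_, ?_⟩
    · intro m
      exact (vars_smul_sub c).trans (hfv m)
    · intro m
      show aeval _ (c • f (m+1)) = c • f m
      rw [map_smul, hfs m]
    · intro m i hi
      show aeval _ (c • f (m+1)) = aeval _ (c • f m)
      rw [map_smul, map_smul, hfe m i hi]
    · intro m
      exact homog_smul c (hfh m)

/-- The coefficient-extraction linear map indexed by compositions. -/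
def Phi (n : ℕ) : (ℕ → MvPolynomial ℕ ℚ) →ₗ[ℚ] (Composition n → ℚ) where
  toFun := fun f c => coeff (vecC c) (f n)
  map_add' := fun f g => by funext c; simp [MvPolynomial.coeff_add]
  map_smul' := fun a f => by funext c; simp [MvPolynomial.coeff_smul]

end Stmt8Proof



set_option synthInstance.maxHeartbeats 1000000 in
/-- For every `n ≥ 1`, the space of stable x-families satisfying (E_x)
whose members are homogeneous of degree `n` has dimension at most `2^(n-1)`: there is a
spanning set of cardinality at most `2^(n-1)`. -/
theorem stmt8 (n : ℕ) (hn : 1 ≤ n) :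
    ∃ s : Finset (ℕ → MvPolynomial ℕ ℚ), s.card ≤ 2 ^ (n - 1) ∧
      ∀ f : ℕ → MvPolynomial ℕ ℚ, IsStableX f → SatisfiesEx f →
        (∀ m, (f m).IsHomogeneous n) →
        f ∈ Submodule.span ℚ (s : Set (ℕ → MvPolynomial ℕ ℚ)) := by
  classical
  set W := Stmt8Proof.Wmod n with hW
  set Φ' := (Stmt8Proof.Phi n).domRestrict W with hΦ'
  have hker : Function.Injective Φ' := by
    rw [injective_iff_map_eq_zero]
    rintro ⟨f, hf⟩ h0
    obtain ⟨hst, hEx, hhom⟩ := hf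
    have hcomp : ∀ c : Composition n, MvPolynomial.coeff (Stmt8Proof.vecC c) (f n) = 0 := by
      intro c
      have := congrFun h0 c
      exact this
    have hall := Stmt8Proof.Cf_zero hst hEx hhom hn hcomp
    apply Subtype.ext
    funext m
    exact Stmt8Proof.family_zero hst (fun d => hall (Stmt8Proof.Ew d) d rfl) m
  haveI : Module.Finite ℚ ↥W := Module.Finite.of_injective Φ' hker
  have hrank : Module.finrank ℚ ↥W ≤ 2 ^ (n - 1) := by
    have h1 := LinearMap.finrank_le_finrank_of_injective hker
    rwa [Module.finrank_pi, composition_card] at h1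
  haveI : Module.Free ℚ ↥W := Module.Free.of_divisionRing ℚ ↥W
  set b := Module.finBasis ℚ ↥W with hb
  refine ⟨Finset.image (fun j => ((b j : ↥W) : ℕ → MvPolynomial ℕ ℚ)) Finset.univ, ?_, ?_⟩
  · calc (Finset.image (fun j => ((b j : ↥W) : ℕ → MvPolynomial ℕ ℚ)) Finset.univ).card
        ≤ Finset.univ.card := Finset.card_image_le
    _ = Module.finrank ℚ ↥W := by simp
    _ ≤ 2 ^ (n - 1) := hrank
  · intro f h1 h2 h3
    have hfW : f ∈ W := ⟨h1, h2, h3⟩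
    have hcoe : ((Finset.image (fun j => ((b j : ↥W) : ℕ → MvPolynomial ℕ ℚ)) Finset.univ : Finset _) :
        Set (ℕ → MvPolynomial ℕ ℚ)) = W.subtype '' Set.range b := by
      rw [Finset.coe_image, Finset.coe_univ, Set.image_univ, ← Set.range_comp]
      rfl
    rw [hcoe, Submodule.span_image, b.span_eq, Submodule.map_top,
      Submodule.range_subtype]
    exact hfW
end
end

section
/- Let f = (f_{2m+1})_{m≥0} and f′ = (f′_{2m+1})_{m≥0} be two stable x-families satisfying equation (E_x). If for every m ≥ 0 one has f_{2m+1}(0,y₁,0,y₂,0,…,0,y_m,0) = f′_{2m+1}(0,y₁,0,y₂,0,…,0,y_m,0) (all odd-indexed variables set to 0), then f_{2m+1} = f′_{2m+1} for all m ≥ 0. -/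
open MvPolynomial
open scoped Classical

noncomputable section

namespace Stmt10Aux

/-- merge map: sends variable `i+1` to `i`. -/
def mrg (i : ℕ) : ℕ → ℕ := fun k => if k = i + 1 then i else k

/-- shift map: skips `i` and `i+1`. -/
def shf (i : ℕ) : ℕ → ℕ := fun k => if k < i then k else k + 2

lemma shf_strictMono (i : ℕ) : StrictMono (shf i) := by
  intro a b hab
  simp only [shf]
  split <;> split <;> omega

lemma shf_injective (i : ℕ) : Function.Injective (shf i) :=
  (shf_strictMono i).injective

lemma shf_not_mem_range₁ (i : ℕ) : i ∉ Set.range (shf i) := by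
  rintro ⟨k, hk⟩
  simp only [shf] at hk
  split at hk <;> omega

lemma shf_not_mem_range₂ (i : ℕ) : i + 1 ∉ Set.range (shf i) := by
  rintro ⟨k, hk⟩
  simp only [shf] at hk
  split at hk <;> omega

lemma mapDomain_mrg (i : ℕ) (u : ℕ →₀ ℕ) :
    Finsupp.mapDomain (mrg i) u = u.erase (i + 1) + Finsupp.single i (u (i + 1)) := by
  conv_lhs => rw [← Finsupp.erase_add_single (i + 1) u]
  rw [Finsupp.mapDomain_add, Finsupp.mapDomain_single]
  congr 1
  · rw [Finsupp.mapDomain_congr (g := id), Finsupp.mapDomain_id]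
    intro x hx
    have hx' : x ≠ i + 1 := by
      rw [Finsupp.support_erase] at hx
      exact (Finset.mem_erase.1 hx).1
    simp [mrg, hx']
  · simp [mrg]

/-- the split monomial: like `D` but with `D i - t` at `i` and `t` at `i+1`. -/
def spl (D : ℕ →₀ ℕ) (i t : ℕ) : ℕ →₀ ℕ :=
  D.erase i + Finsupp.single i (D i - t) + Finsupp.single (i + 1) t

lemma spl_apply (D : ℕ →₀ ℕ) (i t : ℕ) (hD : D (i + 1) = 0) (j : ℕ) :
    spl D i t j = if j = i then D i - t else if j = i + 1 then t else D j := by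
  simp only [spl, Finsupp.add_apply, Finsupp.single_apply]
  rcases eq_or_ne j i with rfl | hji
  · simp [Finsupp.erase_same, (by omega : ¬ (j + 1 = j))]
  · rcases eq_or_ne j (i + 1) with rfl | hji1
    · rw [Finsupp.erase_ne (by omega : i + 1 ≠ i)]
      simp [hD, Ne.symm hji, if_neg hji, if_neg (Ne.symm hji)]
    · rw [Finsupp.erase_ne hji]
      simp [if_neg (Ne.symm hji), if_neg (Ne.symm hji1), hji, hji1]

lemma spl_zero (D : ℕ →₀ ℕ) (i : ℕ) (hD : D (i + 1) = 0) : spl D i 0 = D := by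
  ext j
  rw [spl_apply D i 0 hD]
  split_ifs with h1 h2
  · subst h1; omega
  · subst h2; omega
  · rfl

lemma spl_apply_succ (D : ℕ →₀ ℕ) (i t : ℕ) (hD : D (i + 1) = 0) :
    spl D i t (i + 1) = t := by
  rw [spl_apply D i t hD]
  simp [(by omega : ¬ (i + 1 = i))]

lemma mapDomain_mrg_spl (D : ℕ →₀ ℕ) (i t : ℕ) (hD : D (i + 1) = 0) (ht : t ≤ D i) :
    Finsupp.mapDomain (mrg i) (spl D i t) = D := by
  rw [mapDomain_mrg, spl_apply_succ D i t hD]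
  ext j
  rw [Finsupp.add_apply, Finsupp.single_apply]
  rcases eq_or_ne j (i + 1) with rfl | hj1
  · rw [Finsupp.erase_same, if_neg (by omega : ¬ i = i + 1)]
    omega
  · rw [Finsupp.erase_ne hj1, spl_apply D i t hD]
    rcases eq_or_ne j i with rfl | hji
    · rw [if_pos rfl, if_pos rfl]
      omega
    · rw [if_neg hji, if_neg hj1, if_neg (Ne.symm hji)]
      omega

lemma coeff_rename_mrg (i : ℕ) (P : MvPolynomial ℕ ℚ) :
    ∀ D : ℕ →₀ ℕ, D (i + 1) = 0 →
      coeff D (rename (mrg i) P) =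
        ∑ t ∈ Finset.range (D i + 1), coeff (spl D i t) P := by
  induction P using MvPolynomial.induction_on' with
  | monomial u c =>
    intro D hD
    rw [rename_monomial, coeff_monomial]
    by_cases h : Finsupp.mapDomain (mrg i) u = D
    · rw [if_pos h]
      rw [mapDomain_mrg] at h
      have hui : u i + u (i + 1) = D i := by
        have := congrArg (fun v : ℕ →₀ ℕ => v i) h
        simpa [Finsupp.add_apply, Finsupp.erase_ne (by omega : i ≠ i + 1),
          Finsupp.single_apply] using this
      have ht0 : u (i + 1) ≤ D i := by omega
      have hpt : ∀ j, j ≠ i → j ≠ i + 1 → u j = D j := by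
        intro j hji hj1
        have := congrArg (fun v : ℕ →₀ ℕ => v j) h
        simpa [Finsupp.add_apply, Finsupp.erase_ne hj1,
          Finsupp.single_apply, if_neg (Ne.symm hji)] using this
      have hu : u = spl D i (u (i + 1)) := by
        ext j
        rw [spl_apply D i _ hD]
        split_ifs with h1 h2
        · subst h1; omega
        · subst h2; rfl
        · exact hpt j h1 h2
      rw [Finset.sum_eq_single_of_mem (u (i + 1)) (Finset.mem_range.2 (by omega))]
      · rw [coeff_monomial, if_pos hu]
      · intro b _ hb
        rw [coeff_monomial, if_neg]
        intro hub
        apply hb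
        rw [← spl_apply_succ D i b hD, ← hub, hu, spl_apply_succ D i _ hD]
    · rw [if_neg h]
      symm
      apply Finset.sum_eq_zero
      intro t ht
      rw [coeff_monomial, if_neg]
      intro hut
      apply h
      rw [hut, mapDomain_mrg_spl D i t hD (by have := Finset.mem_range.1 ht; omega)]
  | add p q hp hq =>
    intro D hD
    simp [coeff_add, hp D hD, hq D hD, Finset.sum_add_distrib]

/-- substitute 0 for all even-indexed variables. -/
def zE : ℕ → MvPolynomial ℕ ℚ := fun k => if k % 2 = 0 then 0 else X k

lemma coeff_aeval_zE (P : MvPolynomial ℕ ℚ) :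
    ∀ D : ℕ →₀ ℕ, (∀ k ∈ D.support, k % 2 ≠ 0) →
      coeff D (aeval zE P) = coeff D P := by
  induction P using MvPolynomial.induction_on' with
  | monomial u c =>
    intro D hD
    rw [aeval_monomial]
    by_cases h : ∀ k ∈ u.support, k % 2 ≠ 0
    · have hprod : (u.prod fun n e => zE n ^ e) =
          u.prod fun n e => (X n : MvPolynomial ℕ ℚ) ^ e := by
        apply Finsupp.prod_congr
        intro k hk
        rw [zE, if_neg (h k hk)]
      rw [hprod, MvPolynomial.algebraMap_eq, ← monomial_eq]
    · push_neg at h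
      obtain ⟨k, hk, hk2⟩ := h
      have hprod : (u.prod fun n e => zE n ^ e) = 0 := by
        apply Finset.prod_eq_zero hk
        simp only [zE, if_pos hk2]
        exact zero_pow (Finsupp.mem_support_iff.1 hk)
      rw [hprod, mul_zero, coeff_zero, coeff_monomial, if_neg]
      intro hc
      subst hc
      exact hD k hk hk2
  | add p q hp hq =>
    intro D hD
    rw [map_add, coeff_add, coeff_add, hp D hD, hq D hD]

/-- the even mass of an exponent vector. -/
def em (D : ℕ →₀ ℕ) : ℕ := D.sum fun k n => if k % 2 = 0 then n else 0

lemma em_add (A B : ℕ →₀ ℕ) : em (A + B) = em A + em B :=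
  Finsupp.sum_add_index' (fun a => by simp) (fun a b₁ b₂ => by split <;> simp)

lemma em_single (k n : ℕ) : em (Finsupp.single k n) = if k % 2 = 0 then n else 0 :=
  Finsupp.sum_single_index (by simp)

lemma em_erase_add (D : ℕ →₀ ℕ) (i : ℕ) :
    em D = em (D.erase i) + if i % 2 = 0 then D i else 0 := by
  conv_lhs => rw [← Finsupp.erase_add_single i D]
  rw [em_add, em_single]

lemma em_mapDomain_shf (i : ℕ) (D : ℕ →₀ ℕ) :
    em (Finsupp.mapDomain (shf i) D) = em D := by
  unfold em
  rw [Finsupp.sum_mapDomain_index_inj (shf_injective i)]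
  apply Finsupp.sum_congr
  intro k _
  have : shf i k % 2 = k % 2 := by unfold shf; split <;> omega
  rw [this]

lemma em_zero_odd {D : ℕ →₀ ℕ} (h : em D = 0) : ∀ k ∈ D.support, k % 2 ≠ 0 := by
  intro k hk hke
  have := (Finset.sum_eq_zero_iff.1 h) k hk
  simp only [hke, if_true] at this
  exact Finsupp.mem_support_iff.1 hk this

lemma em_spl_add (D : ℕ →₀ ℕ) (i t : ℕ) (hi : i % 2 = 0) (ht : t ≤ D i) :
    em (spl D i t) + t = em D := by
  unfold spl
  rw [em_add, em_add, em_single, em_single, if_pos hi,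
    if_neg (by omega : ¬ (i + 1) % 2 = 0)]
  have h := em_erase_add D i
  rw [if_pos hi] at h
  omega

lemma coeffs_vanish (g : ℕ → MvPolynomial ℕ ℚ)
    (hvars : ∀ m, (g m).vars ⊆ Finset.range (2 * m + 1))
    (hE : ∀ m i, i < 2 * m + 2 → rename (mrg i) (g (m + 1)) = rename (shf i) (g m))
    (hZ : ∀ m, aeval zE (g m) = 0) :
    ∀ n m D, em D = n → coeff D (g m) = 0 := by
  intro n
  induction n using Nat.strong_induction_on with
  | _ n IH =>
  intro m D hn
  rcases Nat.eq_zero_or_pos n with rfl | hpos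
  · rw [← coeff_aeval_zE (g m) D (em_zero_odd hn), hZ, coeff_zero]
  · have hex : ∃ p, p % 2 = 0 ∧ D p ≠ 0 := by
      by_contra hc
      push_neg at hc
      have : em D = 0 := by
        apply Finset.sum_eq_zero
        intro k _
        show (if k % 2 = 0 then D k else 0) = 0
        split_ifs with h
        · exact hc k h
        · rfl
      omega
    obtain ⟨p, hp2, hpD⟩ := hex
    by_cases hplt : p < 2 * m + 1
    · set d' := Finsupp.mapDomain (shf (p + 1)) D with hd'
      have h1 : d' (p + 1) = 0 :=
        Finsupp.mapDomain_notin_range _ _ (shf_not_mem_range₁ (p + 1))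
      have h2 : d' (p + 1 + 1) = 0 :=
        Finsupp.mapDomain_notin_range _ _ (shf_not_mem_range₂ (p + 1))
      have h3 : d' p = D p := by
        have hsp : shf (p + 1) p = p := by unfold shf; rw [if_pos (by omega)]
        conv_lhs => rw [← hsp]
        exact Finsupp.mapDomain_apply (shf_injective _) _ _
      have hem' : em d' = n := by rw [hd', em_mapDomain_shf]; exact hn
      -- Step A : coeff d' (g (m+1)) = coeff D (g m)
      have hA : coeff d' (g (m + 1)) = coeff D (g m) := by
        have hEx := congrArg (coeff d') (hE m (p + 1) (by omega))
        rw [coeff_rename_mrg (p + 1) _ d' h2, hd',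
          coeff_rename_mapDomain _ (shf_injective _)] at hEx
        rw [← hd'] at hEx
        rw [h1] at hEx
        simpa [spl_zero d' (p + 1) h2, ← hd'] using hEx
      -- Step B
      have hEx2 := congrArg (coeff d') (hE m p (by omega))
      rw [coeff_rename_mrg p _ d' h1] at hEx2
      have hRzero : coeff d' (rename (shf p) (g m)) = 0 := by
        apply coeff_rename_eq_zero
        intro u hu
        exfalso
        apply hpD
        rw [← h3, ← hu]
        exact Finsupp.mapDomain_notin_range _ _ (shf_not_mem_range₁ p)
      rw [hRzero, Finset.sum_range_succ', spl_zero d' p h1] at hEx2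
      have hterms : ∀ t ∈ Finset.range (d' p), coeff (spl d' p (t + 1)) (g (m + 1)) = 0 := by
        intro t ht
        have h4 : t + 1 ≤ d' p := Finset.mem_range.1 ht
        apply IH (em (spl d' p (t + 1))) ?_ (m + 1) _ rfl
        have := em_spl_add d' p (t + 1) hp2 h4
        omega
      rw [Finset.sum_eq_zero hterms, zero_add] at hEx2
      rw [← hA]
      exact hEx2
    · by_contra hc
      have hDmem : D ∈ (g m).support := MvPolynomial.mem_support_iff.2 hc
      have : p ∈ (g m).vars :=
        (MvPolynomial.mem_vars p).2 ⟨D, hDmem, Finsupp.mem_support_iff.2 hpD⟩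
      exact hplt (Finset.mem_range.1 (hvars m this))

lemma aeval_merge (i : ℕ) (P : MvPolynomial ℕ ℚ) :
    aeval (fun k => if k = i + 1 then (X i : MvPolynomial ℕ ℚ) else X k) P =
      rename (mrg i) P := by
  have hfn : (fun k => if k = i + 1 then (X i : MvPolynomial ℕ ℚ) else X k) =
      X ∘ mrg i := by
    funext k
    simp only [Function.comp, mrg]
    split <;> rfl
  rw [hfn]
  exact congrArg (fun φ : MvPolynomial ℕ ℚ →ₐ[ℚ] MvPolynomial ℕ ℚ => φ P)
    (MvPolynomial.algHom_ext (fun k => by simp))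

lemma aeval_shift (i : ℕ) (P : MvPolynomial ℕ ℚ) :
    aeval (fun k => if k < i then (X k : MvPolynomial ℕ ℚ) else X (k + 2)) P =
      rename (shf i) P := by
  have hfn : (fun k => if k < i then (X k : MvPolynomial ℕ ℚ) else X (k + 2)) =
      X ∘ shf i := by
    funext k
    simp only [Function.comp, shf]
    split <;> rfl
  rw [hfn]
  exact congrArg (fun φ : MvPolynomial ℕ ℚ →ₐ[ℚ] MvPolynomial ℕ ℚ => φ P)
    (MvPolynomial.algHom_ext (fun k => by simp))

lemma aeval_zE_eq (P : MvPolynomial ℕ ℚ) :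
    aeval zE P = rename (fun j => 2 * j + 1) (aeval oddZero P) := by
  have : (aeval zE : MvPolynomial ℕ ℚ →ₐ[ℚ] MvPolynomial ℕ ℚ) =
      (rename (fun j => 2 * j + 1)).comp (aeval oddZero) := by
    apply MvPolynomial.algHom_ext
    intro k
    simp only [aeval_X, AlgHom.comp_apply, oddZero, zE]
    by_cases h : k % 2 = 0
    · simp [h]
    · simp only [h, if_false, rename_X]
      congr 1
      omega
  rw [this]
  rfl

end Stmt10Aux

/-- Two stable x-families satisfying (E_x) which agree after setting
all odd-indexed variables to `0` are equal. -/
theorem stmt10 (f f' : ℕ → MvPolynomial ℕ ℚ)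
    (hf : IsStableX f) (hf' : IsStableX f')
    (hex : SatisfiesEx f) (hex' : SatisfiesEx f')
    (heq : ∀ m, aeval oddZero (f m) = aeval oddZero (f' m)) :
    ∀ m, f m = f' m := by
  classical
  have hvars : ∀ m, (f m - f' m).vars ⊆ Finset.range (2 * m + 1) := fun m =>
    (MvPolynomial.vars_sub_subset (f m) (q := f' m)).trans
      (Finset.union_subset (hf.1 m) (hf'.1 m))
  have hE : ∀ m i, i < 2 * m + 2 →
      rename (Stmt10Aux.mrg i) (f (m + 1) - f' (m + 1)) =
        rename (Stmt10Aux.shf i) (f m - f' m) := by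
    intro m i hi
    rw [map_sub, map_sub, ← Stmt10Aux.aeval_merge i, ← Stmt10Aux.aeval_merge i,
      ← Stmt10Aux.aeval_shift i, ← Stmt10Aux.aeval_shift i, hex m i hi, hex' m i hi]
  have hZ : ∀ m, aeval Stmt10Aux.zE (f m - f' m) = 0 := by
    intro m
    rw [Stmt10Aux.aeval_zE_eq, map_sub, heq m, sub_self, map_zero]
  intro m
  have h0 : f m - f' m = 0 := by
    apply MvPolynomial.ext
    intro D
    rw [coeff_zero]
    exact Stmt10Aux.coeffs_vanish (fun m => f m - f' m) hvars hE hZ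
      (Stmt10Aux.em D) m D rfl
  exact sub_eq_zero.1 h0
end
end

section
/- Let P be a finite ranked poset, and for each m ≥ 0 let f_{2m+1} ∈ ℚ[x₁,…,x_{2m+1}] be obtained from N_P^(m) by the substitution (⋆), i.e. by setting p_i := x_{2i−1} − x_{2i} (1 ≤ i ≤ m), q_i := x_{2i} − x_{2i+1} (1 ≤ i ≤ m) and p_{m+1} := x_{2m+1}. Then (f_{2m+1})_{m≥0} is the unique stable x-family satisfying equation (E_x) such that for every m ≥ 0 one has f_{2m+1}(0,y₁,0,y₂,0,…,0,y_m,0) = (−1)^{|V₀|} · F_P^(m)(y₁,…,y_m), where |V₀| is the number of elements of P of even rank. -/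
open MvPolynomial
open scoped Classical

noncomputable section

-- PART1
namespace S11

variable {α : Type} [PartialOrder α] [Fintype α] {ht : α → ℕ}

/-- order condition in ℕ-valued form -/
def ocN (ht : α → ℕ) (ρ : α → ℕ) : Prop :=
  (∀ x y : α, x ≤ y → ρ x ≤ ρ y) ∧ ∀ x y : α, x < y → Odd (ht x) → ρ x < ρ y

lemma orderCond_iff {N : ℕ} (r : α → Fin N) :
    OrderCond ht r ↔ ocN ht (fun v => (r v : ℕ)) := by
  constructor
  · rintro ⟨h1, h2⟩
    exact ⟨fun x y hxy => h1 x y hxy, fun x y hxy ho => h2 x y hxy ho⟩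
  · rintro ⟨h1, h2⟩
    exact ⟨fun x y hxy => h1 x y hxy, fun x y hxy ho => h2 x y hxy ho⟩

lemma exists_cover_le {v w : α} (h : v < w) : ∃ z, v ⋖ z ∧ z ≤ w := by
  obtain ⟨z, hz, hmin⟩ : ∃ z ∈ Finset.univ.filter (fun z => v < z ∧ z ≤ w),
      ∀ x ∈ Finset.univ.filter (fun z => v < z ∧ z ≤ w), ¬ x < z := by
    obtain ⟨z, hz1, hz2⟩ :=
      Finset.exists_minimal (s := Finset.univ.filter fun z => v < z ∧ z ≤ w) ⟨w, by simp [h]⟩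
    exact ⟨z, hz1, fun x hx hlt => lt_irrefl x (lt_of_lt_of_le hlt (hz2 hx hlt.le))⟩
  simp only [Finset.mem_filter, Finset.mem_univ, true_and] at hz
  refine ⟨z, ⟨hz.1, fun y hvy hyz => ?_⟩, hz.2⟩
  exact hmin y (by
    simp only [Finset.mem_filter, Finset.mem_univ, true_and]
    exact ⟨hvy, hyz.le.trans hz.2⟩) hyz

lemma exists_isMin_le (v : α) : ∃ u, IsMin u ∧ u ≤ v := by
  obtain ⟨u, hu, hmin⟩ : ∃ u ∈ Finset.univ.filter (fun u => u ≤ v),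
      ∀ x ∈ Finset.univ.filter (fun u => u ≤ v), ¬ x < u := by
    obtain ⟨u, hu1, hu2⟩ :=
      Finset.exists_minimal (s := Finset.univ.filter fun u => u ≤ v) ⟨v, by simp⟩
    exact ⟨u, hu1, fun x hx hlt => lt_irrefl x (lt_of_lt_of_le hlt (hu2 hx hlt.le))⟩
  simp only [Finset.mem_filter, Finset.mem_univ, true_and] at hu
  refine ⟨u, fun x hx => ?_, hu⟩
  by_contra hux
  exact hmin x (by
    simp only [Finset.mem_filter, Finset.mem_univ, true_and]
    exact hx.trans hu) (lt_of_le_not_ge hx hux)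

lemma even_strict (hrk : IsRanked ht) {ρ : α → ℕ} (hoc : ocN ht ρ) {x y : α}
    (hxy : x < y) (hex : Even (ht x)) (hey : Even (ht y)) : ρ x < ρ y := by
  obtain ⟨z, hcov, hzw⟩ := exists_cover_le hxy
  have hz : ht z = ht x + 1 := hrk.2 x z hcov
  have hodd : Odd (ht z) := by rw [hz]; exact Even.add_one hex
  have hne : z ≠ y := by
    intro h; rw [h] at hodd
    exact (Nat.not_odd_iff_even.mpr hey) hodd
  exact lt_of_le_of_lt (hoc.1 x z hcov.le) (hoc.2 z y (lt_of_le_of_ne hzw hne) hodd)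

lemma odd_chain (hrk : IsRanked ht) {ρ : α → ℕ} (hoc : ocN ht ρ) {x y : α}
    (hxy : x < y) (hx : Odd (ht x)) :
    ∃ z, Even (ht z) ∧ ρ x < ρ z ∧ ρ z ≤ ρ y := by
  obtain ⟨z, hcov, hzw⟩ := exists_cover_le hxy
  have hz : ht z = ht x + 1 := hrk.2 x z hcov
  exact ⟨z, by rw [hz]; exact Odd.add_one hx, hoc.2 x z hcov.lt hx, hoc.1 z y hzw⟩

lemma zero_label_dead (hrk : IsRanked ht) {ρ : α → ℕ} (hoc : ocN ht ρ) {v : α}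
    (hv : ρ v = 0) : ∃ u, Even (ht u) ∧ ρ u = 0 := by
  rcases Nat.even_or_odd (ht v) with he | ho
  · exact ⟨v, he, hv⟩
  · obtain ⟨u, hmin, hle⟩ := exists_isMin_le v
    have hu : ht u = 0 := hrk.1 u hmin
    have : ρ u ≤ ρ v := hoc.1 u v hle
    exact ⟨u, by simp [hu], by omega⟩

/-- the generic weighted sum -/
def wsum (α : Type) [Fintype α] [PartialOrder α] (ht : α → ℕ) (m : ℕ)
    {R : Type} [CommRing R] (P Q : ℕ → R) : R :=
  ∑ r : α → Fin (m + 1),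
    if OrderCond ht r ∧ ∀ v, Odd (ht v) → (r v : ℕ) < m then
      ∏ v : α, if Even (ht v) then P (r v : ℕ) else Q (r v : ℕ)
    else 0

lemma aeval_NP {S : Type} [CommRing S] [Algebra ℚ S] (g : ℕ ⊕ ℕ → S) (m : ℕ) :
    aeval g (NP α ht m) = wsum α ht m (fun k => g (Sum.inl k)) (fun k => g (Sum.inr k)) := by
  unfold NP wsum
  rw [map_sum]
  refine Finset.sum_congr rfl fun r _ => ?_
  split_ifs with h
  · rw [map_prod]
    refine Finset.prod_congr rfl fun v _ => ?_
    split_ifs <;> simp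
  · simp

lemma aeval_comp {S : Type} [CommRing S] [Algebra ℚ S]
    (h : ℕ ⊕ ℕ → MvPolynomial ℕ ℚ) (g : ℕ → S) (p : MvPolynomial (ℕ ⊕ ℕ) ℚ) :
    aeval g (aeval h p) = aeval (fun s => aeval g (h s)) p := by
  have : (aeval g).comp (aeval h) =
      (aeval (fun s => aeval g (h s)) : MvPolynomial (ℕ ⊕ ℕ) ℚ →ₐ[ℚ] S) := by
    apply MvPolynomial.algHom_ext; intro s; simp
  exact DFunLike.congr_fun this p

lemma aeval_rename (σ : ℕ → ℕ) (p : MvPolynomial ℕ ℚ) :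
    aeval (fun k => (X (σ k) : MvPolynomial ℕ ℚ)) p = rename σ p :=
  DFunLike.congr_fun (MvPolynomial.algHom_ext (fun k => by simp)) p

lemma wsum_congr {R : Type} [CommRing R] (m : ℕ) (P Q P' Q' : ℕ → R)
    (hP : ∀ j, j ≤ m → P j = P' j) (hQ : ∀ j, j < m → Q j = Q' j) :
    wsum α ht m P Q = wsum α ht m P' Q' := by
  unfold wsum
  refine Finset.sum_congr rfl fun r _ => ?_
  split_ifs with h
  · refine Finset.prod_congr rfl fun v _ => ?_
    split_ifs with hv
    · exact hP _ (by omega)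
    · exact hQ _ (h.2 v (Nat.odd_iff.mpr (by
        rcases Nat.even_or_odd (ht v) with h' | h'
        · exact absurd h' hv
        · exact Nat.odd_iff.mp h')))
  · rfl

end S11
-- PART2
namespace S11
set_option linter.unusedSectionVars false
set_option maxHeartbeats 1000000

variable {α : Type} [PartialOrder α] [Fintype α] {ht : α → ℕ}

theorem iteInst {γ : Sort _} {c : Prop} {i1 i2 : Decidable c} (a b : γ) :
    @ite _ c i1 a b = @ite _ c i2 a b := by
  rw [Subsingleton.elim i1 i2]

/-- condition in ℕ-valued form -/
def nCond (ht : α → ℕ) (m : ℕ) (ρ : α → ℕ) : Prop :=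
  ocN ht ρ ∧ ∀ v, Odd (ht v) → ρ v < m

/-- term in ℕ-valued form -/
def nTerm (ht : α → ℕ) {R : Type} [CommRing R] (P Q : ℕ → R) (m : ℕ) (ρ : α → ℕ) : R :=
  if nCond ht m ρ then ∏ v : α, (if Even (ht v) then P (ρ v) else Q (ρ v)) else 0

lemma sum_pi_fin {R : Type} [AddCommMonoid R] (N : ℕ) (T : (α → ℕ) → R) :
    (∑ r : α → Fin N, T (fun v => (r v : ℕ)))
      = ∑ ρ ∈ Fintype.piFinset (fun _ : α => Finset.range N), T ρ := by
  classical
  refine Finset.sum_bij' (i := fun (r : α → Fin N) _ => fun v => (r v : ℕ))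
    (j := fun (ρ : α → ℕ) hρ => fun v => (⟨ρ v, by
      have := (Fintype.mem_piFinset.mp hρ) v
      simpa [Finset.mem_range] using this⟩ : Fin N))
    ?_ ?_ ?_ ?_ ?_
  · intro r _
    simp only [Fintype.mem_piFinset, Finset.mem_range]
    intro v; exact (r v).isLt
  · intro ρ hρ; exact Finset.mem_univ _
  · intro r _; funext v; apply Fin.ext; rfl
  · intro ρ hρ; rfl
  · intro r _; rfl

lemma wsum_eq_nsum {R : Type} [CommRing R] (m : ℕ) (P Q : ℕ → R) :
    wsum α ht m P Q
      = ∑ ρ ∈ Fintype.piFinset (fun _ : α => Finset.range (m+1)), nTerm ht P Q m ρ := by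
  unfold wsum
  rw [← sum_pi_fin (m+1) (nTerm ht P Q m)]
  refine Finset.sum_congr rfl fun r _ => ?_
  simp only [nTerm, nCond, orderCond_iff]

/-- stability at the ℕ level -/
lemma nsum_stab {R : Type} [CommRing R] (m : ℕ) (P Q : ℕ → R)
    (hP : P (m+1) = 0) (hQ : Q m = 0) :
    (∑ ρ ∈ Fintype.piFinset (fun _ : α => Finset.range (m+2)), nTerm ht P Q (m+1) ρ)
      = ∑ ρ ∈ Fintype.piFinset (fun _ : α => Finset.range (m+1)), nTerm ht P Q m ρ := by
  classical
  have hsub : Fintype.piFinset (fun _ : α => Finset.range (m+1))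
      ⊆ Fintype.piFinset (fun _ : α => Finset.range (m+2)) := by
    intro ρ hρ
    simp only [Fintype.mem_piFinset, Finset.mem_range] at hρ ⊢
    intro v; have := hρ v; omega
  have hz : ∀ ρ ∈ Fintype.piFinset (fun _ : α => Finset.range (m+2)),
      ρ ∉ Fintype.piFinset (fun _ : α => Finset.range (m+1)) → nTerm ht P Q (m+1) ρ = 0 := by
    intro ρ hρ hρ'
    simp only [Fintype.mem_piFinset, Finset.mem_range] at hρ hρ'
    push_neg at hρ'
    obtain ⟨v, hv⟩ := hρ'
    have hvm : ρ v = m + 1 := by have := hρ v; omega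
    unfold nTerm nCond
    split_ifs with hc
    · rcases Nat.even_or_odd (ht v) with he | ho
      · refine Finset.prod_eq_zero (Finset.mem_univ v) ?_
        rw [if_pos he, hvm, hP]
      · exact absurd (hc.2 v ho) (by omega)
    · rfl
  rw [← Finset.sum_subset hsub hz]
  refine Finset.sum_congr rfl fun ρ hρ => ?_
  simp only [Fintype.mem_piFinset, Finset.mem_range] at hρ
  unfold nTerm nCond
  by_cases hodd : ∀ v, Odd (ht v) → ρ v < m
  · have heq : (ocN ht ρ ∧ ∀ v, Odd (ht v) → ρ v < m + 1) ↔ (ocN ht ρ ∧ ∀ v, Odd (ht v) → ρ v < m) := by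
      constructor
      · rintro ⟨h1, _⟩; exact ⟨h1, hodd⟩
      · rintro ⟨h1, h2⟩; exact ⟨h1, fun v hv => by have := h2 v hv; omega⟩
    simp only [heq]
    exact iteInst _ _
  · push_neg at hodd
    obtain ⟨v, hv, hvm⟩ := hodd
    have hvm' : ρ v = m := by have := hρ v; omega
    have hR : ¬(ocN ht ρ ∧ ∀ v, Odd (ht v) → ρ v < m) := by
      rintro ⟨_, h2⟩; exact absurd (h2 v hv) (by omega)
    simp only [hR, if_false]
    split_ifs with hc
    · refine Finset.prod_eq_zero (Finset.mem_univ v) ?_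
      rw [if_neg (Nat.not_even_iff_odd.mpr hv), hvm', hQ]
    · rfl

/-- evaluation: drop to functions with all labels < m -/
lemma nsum_eval {R : Type} [CommRing R] (m : ℕ) (P Q : ℕ → R) (hP : P m = 0) :
    (∑ ρ ∈ Fintype.piFinset (fun _ : α => Finset.range (m+1)), nTerm ht P Q m ρ)
      = ∑ ρ ∈ Fintype.piFinset (fun _ : α => Finset.range m),
          (if ocN ht ρ then ∏ v : α, (if Even (ht v) then P (ρ v) else Q (ρ v)) else 0) := by
  classical
  have hsub : Fintype.piFinset (fun _ : α => Finset.range m)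
      ⊆ Fintype.piFinset (fun _ : α => Finset.range (m+1)) := by
    intro ρ hρ
    simp only [Fintype.mem_piFinset, Finset.mem_range] at hρ ⊢
    intro v; have := hρ v; omega
  have hz : ∀ ρ ∈ Fintype.piFinset (fun _ : α => Finset.range (m+1)),
      ρ ∉ Fintype.piFinset (fun _ : α => Finset.range m) → nTerm ht P Q m ρ = 0 := by
    intro ρ hρ hρ'
    simp only [Fintype.mem_piFinset, Finset.mem_range] at hρ hρ'
    push_neg at hρ'
    obtain ⟨v, hv⟩ := hρ'
    have hvm : ρ v = m := by have := hρ v; omega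
    unfold nTerm nCond
    split_ifs with hc
    · rcases Nat.even_or_odd (ht v) with he | ho
      · refine Finset.prod_eq_zero (Finset.mem_univ v) ?_
        rw [if_pos he, hvm, hP]
      · exact absurd (hc.2 v ho) (by omega)
    · rfl
  rw [← Finset.sum_subset hsub hz]
  refine Finset.sum_congr rfl fun ρ hρ => ?_
  simp only [Fintype.mem_piFinset, Finset.mem_range] at hρ
  unfold nTerm nCond
  have heq : (ocN ht ρ ∧ ∀ v, Odd (ht v) → ρ v < m) ↔ ocN ht ρ := by
    constructor
    · exact fun h => h.1
    · exact fun h => ⟨h, fun v _ => hρ v⟩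
  simp only [heq]

end S11
-- PART3 : merge lemmas
namespace S11
set_option linter.unusedSectionVars false
set_option maxHeartbeats 1000000
variable {α : Type} [PartialOrder α] [Fintype α] {ht : α → ℕ}

lemma nsum_mergeQ {R : Type} [CommRing R] (hrk : IsRanked ht) {c m : ℕ} (hcm : c ≤ m)
    (P Q P' Q' : ℕ → R) (hQc : Q c = 0)
    (hP1 : ∀ j, j < c → P' j = P j) (hP2 : P' c = P c + P (c+1))
    (hP3 : ∀ j, c < j → j ≤ m → P' j = P (j+1))
    (hQ1 : ∀ j, j < c → Q' j = Q j) (hQ2 : ∀ j, c ≤ j → j < m → Q' j = Q (j+1)) :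
    (∑ ρ ∈ Fintype.piFinset (fun _ : α => Finset.range (m+2)), nTerm ht P Q (m+1) ρ)
      = ∑ ρ' ∈ Fintype.piFinset (fun _ : α => Finset.range (m+1)), nTerm ht P' Q' m ρ' := by
  classical
  set F : α → ℕ → R := fun v n => if Even (ht v) then P n else Q n with hF
  set collN : ℕ → ℕ := fun n => if n ≤ c then n else n - 1 with hcollN
  have hmaps : ∀ ρ ∈ Fintype.piFinset (fun _ : α => Finset.range (m+2)),
      (fun v => collN (ρ v)) ∈ Fintype.piFinset (fun _ : α => Finset.range (m+1)) := by
    intro ρ hρ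
    simp only [Fintype.mem_piFinset, Finset.mem_range] at hρ ⊢
    intro v; have := hρ v; simp only [hcollN]; split_ifs <;> omega
  rw [← Finset.sum_fiberwise_of_maps_to hmaps (nTerm ht P Q (m+1))]
  refine Finset.sum_congr rfl fun ρ' hρ' => ?_
  simp only [Fintype.mem_piFinset, Finset.mem_range] at hρ'
  have hfib : (Fintype.piFinset (fun _ : α => Finset.range (m+2))).filter
        (fun ρ => (fun v => collN (ρ v)) = ρ')
      = Fintype.piFinset (fun v => (Finset.range (m+2)).filter (fun n => collN n = ρ' v)) := by
    ext ρ
    simp only [Finset.mem_filter, Fintype.mem_piFinset, funext_iff]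
    constructor
    · rintro ⟨h1, h2⟩ v; exact ⟨h1 v, h2 v⟩
    · intro h; exact ⟨fun v => (h v).1, fun v => (h v).2⟩
  rw [hfib]
  -- the "form" of fiber members
  have hform : ∀ ρ : α → ℕ, (∀ v, collN (ρ v) = ρ' v) →
      ∀ v, (ρ v = ρ' v ∧ ρ v ≤ c) ∨ (ρ v = ρ' v + 1 ∧ c < ρ v) := by
    intro ρ hl v
    have := hl v
    simp only [hcollN] at this
    split_ifs at this <;> omega
  -- forward condition transfer
  have hfwd : ∀ ρ : α → ℕ, (∀ v, collN (ρ v) = ρ' v) →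
      (∀ v, Odd (ht v) → ρ v ≠ c) → nCond ht m ρ' → nCond ht (m+1) ρ := by
    intro ρ hl hno hc'
    have hoc' := hc'.1
    have form := hform ρ hl
    refine ⟨⟨?_, ?_⟩, ?_⟩
    · intro x y hxy
      rcases eq_or_lt_of_le hxy with rfl | hlt
      · exact le_refl _
      · have h1 := hoc'.1 x y hxy
        rcases lt_or_eq_of_le h1 with h2 | h2
        · have := form x; have := form y; omega
        · rcases Nat.even_or_odd (ht x) with hex | hox
          · rcases Nat.even_or_odd (ht y) with hey | hoy
            · exact absurd (even_strict hrk hoc' hlt hex hey) (by omega)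
            · have hy := hno y hoy
              have := form x; have := form y; omega
          · exact absurd (hoc'.2 x y hlt hox) (by omega)
    · intro x y hxy hox
      have h2 := hoc'.2 x y hxy hox
      have := form x; have := form y; omega
    · intro v hv
      have := hc'.2 v hv; have := form v; omega
  -- converse condition transfer
  have hcnv : ∀ ρ : α → ℕ, (∀ v, collN (ρ v) = ρ' v) →
      (∀ v, Odd (ht v) → ρ v ≠ c) → nCond ht (m+1) ρ → nCond ht m ρ' := by
    intro ρ hl hno hc
    have hoc := hc.1
    have form := hform ρ hl
    refine ⟨⟨?_, ?_⟩, ?_⟩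
    · intro x y hxy
      have := hoc.1 x y hxy; have := form x; have := form y; omega
    · intro x y hxy hox
      have := hoc.2 x y hxy hox; have hnx := hno x hox
      have := form x; have := form y; omega
    · intro v hv
      have := hc.2 v hv; have := hno v hv; have := form v; omega
  have hlink : ∀ ρ : α → ℕ,
      ρ ∈ Fintype.piFinset (fun v => (Finset.range (m+2)).filter (fun n => collN n = ρ' v)) →
      ∀ v, collN (ρ v) = ρ' v := by
    intro ρ hρ v
    have := (Fintype.mem_piFinset.mp hρ) v
    exact (Finset.mem_filter.mp this).2
  by_cases hc' : nCond ht m ρ'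
  · rw [nTerm, if_pos hc']
    have step1 : (∑ ρ ∈ Fintype.piFinset
          (fun v => (Finset.range (m+2)).filter (fun n => collN n = ρ' v)),
          nTerm ht P Q (m+1) ρ)
        = ∑ ρ ∈ Fintype.piFinset
            (fun v => (Finset.range (m+2)).filter (fun n => collN n = ρ' v)),
            ∏ v : α, F v (ρ v) := by
      refine Finset.sum_congr rfl fun ρ hρ => ?_
      by_cases hno : ∀ v, Odd (ht v) → ρ v ≠ c
      · rw [nTerm, if_pos (hfwd ρ (hlink ρ hρ) hno hc')]
      · push_neg at hno
        obtain ⟨v, hv, hvc⟩ := hno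
        have hzero : (if Even (ht v) then P (ρ v) else Q (ρ v)) = 0 := by
          rw [if_neg (Nat.not_even_iff_odd.mpr hv), hvc, hQc]
        have hzF : F v (ρ v) = 0 := hzero
        rw [Finset.prod_eq_zero (Finset.mem_univ v) hzF, nTerm]
        split_ifs with h
        · exact Finset.prod_eq_zero (Finset.mem_univ v) hzero
        · rfl
    rw [step1, ← Finset.prod_univ_sum]
    refine Finset.prod_congr rfl fun v _ => ?_
    have hj := hρ' v
    simp only [hF]
    rcases lt_trichotomy (ρ' v) c with hjc | hjc | hjc
    · have hfilter : (Finset.range (m+2)).filter (fun n => collN n = ρ' v) = {ρ' v} := by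
        ext n
        simp only [Finset.mem_filter, Finset.mem_range, Finset.mem_singleton, hcollN]
        constructor
        · rintro ⟨h1, h2⟩; split_ifs at h2 <;> omega
        · rintro rfl; exact ⟨by omega, by split_ifs <;> omega⟩
      rw [hfilter, Finset.sum_singleton]
      split_ifs with he
      · rw [hP1 _ hjc]
      · rw [hQ1 _ hjc]
    · have hfilter : (Finset.range (m+2)).filter (fun n => collN n = ρ' v) = {c, c+1} := by
        ext n
        simp only [Finset.mem_filter, Finset.mem_range, Finset.mem_insert, Finset.mem_singleton,
          hcollN]
        constructor
        · rintro ⟨h1, h2⟩; split_ifs at h2 <;> omega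
        · rintro (rfl | rfl)
          · exact ⟨by omega, by split_ifs <;> omega⟩
          · exact ⟨by omega, by split_ifs <;> omega⟩
      rw [hfilter, Finset.sum_pair (by omega : c ≠ c + 1), hjc]
      split_ifs with he
      · rw [hP2]
      · have hv : Odd (ht v) := Nat.not_even_iff_odd.mp he
        have hcm' : c < m := by have := hc'.2 v hv; omega
        rw [hQc, zero_add, hQ2 c le_rfl hcm']
    · have hfilter : (Finset.range (m+2)).filter (fun n => collN n = ρ' v) = {ρ' v + 1} := by
        ext n
        simp only [Finset.mem_filter, Finset.mem_range, Finset.mem_singleton, hcollN]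
        constructor
        · rintro ⟨h1, h2⟩; split_ifs at h2 <;> omega
        · rintro rfl; exact ⟨by omega, by split_ifs <;> omega⟩
      rw [hfilter, Finset.sum_singleton]
      split_ifs with he
      · rw [hP3 _ hjc (by omega)]
      · have hv : Odd (ht v) := Nat.not_even_iff_odd.mp he
        rw [hQ2 _ (by omega) (hc'.2 v hv)]
  · rw [nTerm, if_neg hc']
    refine Finset.sum_eq_zero fun ρ hρ => ?_
    rw [nTerm]
    split_ifs with hcnd
    · by_cases hno : ∀ v, Odd (ht v) → ρ v ≠ c
      · exact absurd (hcnv ρ (hlink ρ hρ) hno hcnd) hc'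
      · push_neg at hno
        obtain ⟨v, hv, hvc⟩ := hno
        refine Finset.prod_eq_zero (Finset.mem_univ v) ?_
        rw [if_neg (Nat.not_even_iff_odd.mpr hv), hvc, hQc]
    · rfl

end S11
-- PART4 : mergeP and merge0
namespace S11
set_option linter.unusedSectionVars false
set_option maxHeartbeats 1000000
variable {α : Type} [PartialOrder α] [Fintype α] {ht : α → ℕ}

lemma nsum_mergeP {R : Type} [CommRing R] (hrk : IsRanked ht) {c m : ℕ}
    (hc1 : 1 ≤ c) (hcm : c ≤ m)
    (P Q P' Q' : ℕ → R) (hPc : P c = 0)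
    (hP1 : ∀ j, j < c → P' j = P j)
    (hP3 : ∀ j, c ≤ j → j ≤ m → P' j = P (j+1))
    (hQ1 : ∀ j, j + 1 < c → Q' j = Q j) (hQ2 : Q' (c-1) = Q (c-1) + Q c)
    (hQ3 : ∀ j, c ≤ j → j < m → Q' j = Q (j+1)) :
    (∑ ρ ∈ Fintype.piFinset (fun _ : α => Finset.range (m+2)), nTerm ht P Q (m+1) ρ)
      = ∑ ρ' ∈ Fintype.piFinset (fun _ : α => Finset.range (m+1)), nTerm ht P' Q' m ρ' := by
  classical
  set F : α → ℕ → R := fun v n => if Even (ht v) then P n else Q n with hF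
  set collN : ℕ → ℕ := fun n => if n < c then n else n - 1 with hcollN
  have hmaps : ∀ ρ ∈ Fintype.piFinset (fun _ : α => Finset.range (m+2)),
      (fun v => collN (ρ v)) ∈ Fintype.piFinset (fun _ : α => Finset.range (m+1)) := by
    intro ρ hρ
    simp only [Fintype.mem_piFinset, Finset.mem_range] at hρ ⊢
    intro v; have := hρ v; simp only [hcollN]; split_ifs <;> omega
  rw [← Finset.sum_fiberwise_of_maps_to hmaps (nTerm ht P Q (m+1))]
  refine Finset.sum_congr rfl fun ρ' hρ' => ?_
  simp only [Fintype.mem_piFinset, Finset.mem_range] at hρ'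
  have hfib : (Fintype.piFinset (fun _ : α => Finset.range (m+2))).filter
        (fun ρ => (fun v => collN (ρ v)) = ρ')
      = Fintype.piFinset (fun v => (Finset.range (m+2)).filter (fun n => collN n = ρ' v)) := by
    ext ρ
    simp only [Finset.mem_filter, Fintype.mem_piFinset, funext_iff]
    constructor
    · rintro ⟨h1, h2⟩ v; exact ⟨h1 v, h2 v⟩
    · intro h; exact ⟨fun v => (h v).1, fun v => (h v).2⟩
  rw [hfib]
  have hform : ∀ ρ : α → ℕ, (∀ v, collN (ρ v) = ρ' v) →
      ∀ v, (ρ v = ρ' v ∧ ρ v < c) ∨ (ρ v = ρ' v + 1 ∧ c ≤ ρ v) := by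
    intro ρ hl v
    have := hl v
    simp only [hcollN] at this
    split_ifs at this <;> omega
  have hfwd : ∀ ρ : α → ℕ, (∀ v, collN (ρ v) = ρ' v) →
      (∀ v, Even (ht v) → ρ v ≠ c) → nCond ht m ρ' → nCond ht (m+1) ρ := by
    intro ρ hl hno hc'
    have hoc' := hc'.1
    have form := hform ρ hl
    refine ⟨⟨?_, ?_⟩, ?_⟩
    · intro x y hxy
      rcases eq_or_lt_of_le hxy with rfl | hlt
      · exact le_refl _
      · have h1 := hoc'.1 x y hxy
        rcases lt_or_eq_of_le h1 with h2 | h2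
        · have := form x; have := form y; omega
        · rcases Nat.even_or_odd (ht x) with hex | hox
          · rcases Nat.even_or_odd (ht y) with hey | hoy
            · exact absurd (even_strict hrk hoc' hlt hex hey) (by omega)
            · have hx := hno x hex
              have := form x; have := form y; omega
          · exact absurd (hoc'.2 x y hlt hox) (by omega)
    · intro x y hxy hox
      have h2 := hoc'.2 x y hxy hox
      have := form x; have := form y; omega
    · intro v hv
      have := hc'.2 v hv; have := form v; omega
  have hcnv : ∀ ρ : α → ℕ, (∀ v, collN (ρ v) = ρ' v) →
      (∀ v, Even (ht v) → ρ v ≠ c) → nCond ht (m+1) ρ → nCond ht m ρ' := by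
    intro ρ hl hno hc
    have hoc := hc.1
    have form := hform ρ hl
    refine ⟨⟨?_, ?_⟩, ?_⟩
    · intro x y hxy
      have := hoc.1 x y hxy; have := form x; have := form y; omega
    · intro x y hxy hox
      have hlt := hoc.2 x y hxy hox
      by_cases hbad : ρ x = c - 1 ∧ ρ y = c
      · obtain ⟨z, hez, h1z, h2z⟩ := odd_chain hrk hoc hxy hox
        have hz : ρ z = c := by omega
        exact absurd hz (hno z hez)
      · have := form x; have := form y; omega
    · intro v hv
      have := hc.2 v hv; have := form v; omega
  have hlink : ∀ ρ : α → ℕ,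
      ρ ∈ Fintype.piFinset (fun v => (Finset.range (m+2)).filter (fun n => collN n = ρ' v)) →
      ∀ v, collN (ρ v) = ρ' v := by
    intro ρ hρ v
    have := (Fintype.mem_piFinset.mp hρ) v
    exact (Finset.mem_filter.mp this).2
  by_cases hc' : nCond ht m ρ'
  · rw [nTerm, if_pos hc']
    have step1 : (∑ ρ ∈ Fintype.piFinset
          (fun v => (Finset.range (m+2)).filter (fun n => collN n = ρ' v)),
          nTerm ht P Q (m+1) ρ)
        = ∑ ρ ∈ Fintype.piFinset
            (fun v => (Finset.range (m+2)).filter (fun n => collN n = ρ' v)),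
            ∏ v : α, F v (ρ v) := by
      refine Finset.sum_congr rfl fun ρ hρ => ?_
      by_cases hno : ∀ v, Even (ht v) → ρ v ≠ c
      · rw [nTerm, if_pos (hfwd ρ (hlink ρ hρ) hno hc')]
      · push_neg at hno
        obtain ⟨v, hv, hvc⟩ := hno
        have hzero : (if Even (ht v) then P (ρ v) else Q (ρ v)) = 0 := by
          rw [if_pos hv, hvc, hPc]
        have hzF : F v (ρ v) = 0 := hzero
        rw [Finset.prod_eq_zero (Finset.mem_univ v) hzF, nTerm]
        split_ifs with h
        · exact Finset.prod_eq_zero (Finset.mem_univ v) hzero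
        · rfl
    rw [step1, ← Finset.prod_univ_sum]
    refine Finset.prod_congr rfl fun v _ => ?_
    have hj := hρ' v
    simp only [hF]
    rcases lt_trichotomy (ρ' v) (c-1) with hjc | hjc | hjc
    · have hfilter : (Finset.range (m+2)).filter (fun n => collN n = ρ' v) = {ρ' v} := by
        ext n
        simp only [Finset.mem_filter, Finset.mem_range, Finset.mem_singleton, hcollN]
        constructor
        · rintro ⟨h1, h2⟩; split_ifs at h2 <;> omega
        · rintro rfl; exact ⟨by omega, by split_ifs <;> omega⟩
      rw [hfilter, Finset.sum_singleton]
      split_ifs with he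
      · rw [hP1 _ (by omega)]
      · rw [hQ1 _ (by omega)]
    · have hfilter : (Finset.range (m+2)).filter (fun n => collN n = ρ' v) = {c-1, c} := by
        ext n
        simp only [Finset.mem_filter, Finset.mem_range, Finset.mem_insert, Finset.mem_singleton,
          hcollN]
        constructor
        · rintro ⟨h1, h2⟩; split_ifs at h2 <;> omega
        · rintro (rfl | rfl)
          · exact ⟨by omega, by split_ifs <;> omega⟩
          · exact ⟨by omega, by split_ifs <;> omega⟩
      rw [hfilter, Finset.sum_pair (by omega : c - 1 ≠ c), hjc]
      split_ifs with he
      · rw [hPc, add_zero, hP1 _ (by omega)]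
      · rw [hQ2]
    · have hfilter : (Finset.range (m+2)).filter (fun n => collN n = ρ' v) = {ρ' v + 1} := by
        ext n
        simp only [Finset.mem_filter, Finset.mem_range, Finset.mem_singleton, hcollN]
        constructor
        · rintro ⟨h1, h2⟩; split_ifs at h2 <;> omega
        · rintro rfl; exact ⟨by omega, by split_ifs <;> omega⟩
      rw [hfilter, Finset.sum_singleton]
      split_ifs with he
      · rw [hP3 _ (by omega) (by omega)]
      · have hv : Odd (ht v) := Nat.not_even_iff_odd.mp he
        rw [hQ3 _ (by omega) (hc'.2 v hv)]
  · rw [nTerm, if_neg hc']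
    refine Finset.sum_eq_zero fun ρ hρ => ?_
    rw [nTerm]
    split_ifs with hcnd
    · by_cases hno : ∀ v, Even (ht v) → ρ v ≠ c
      · exact absurd (hcnv ρ (hlink ρ hρ) hno hcnd) hc'
      · push_neg at hno
        obtain ⟨v, hv, hvc⟩ := hno
        refine Finset.prod_eq_zero (Finset.mem_univ v) ?_
        rw [if_pos hv, hvc, hPc]
    · rfl

lemma nsum_merge0 {R : Type} [CommRing R] (hrk : IsRanked ht) (m : ℕ)
    (P Q P' Q' : ℕ → R) (hP0 : P 0 = 0)
    (hP : ∀ j, j ≤ m → P' j = P (j+1)) (hQ : ∀ j, j < m → Q' j = Q (j+1)) :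
    (∑ ρ ∈ Fintype.piFinset (fun _ : α => Finset.range (m+2)), nTerm ht P Q (m+1) ρ)
      = ∑ ρ' ∈ Fintype.piFinset (fun _ : α => Finset.range (m+1)), nTerm ht P' Q' m ρ' := by
  classical
  have hkill : ∀ ρ ∈ Fintype.piFinset (fun _ : α => Finset.range (m+2)),
      nTerm ht P Q (m+1) ρ ≠ 0 → (∀ v, 1 ≤ ρ v) := by
    intro ρ _ hne v
    by_contra h0
    apply hne
    have h0' : ρ v = 0 := by omega
    rw [nTerm]
    split_ifs with hc
    · obtain ⟨u, heu, hu0⟩ := zero_label_dead hrk hc.1 h0'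
      refine Finset.prod_eq_zero (Finset.mem_univ u) ?_
      rw [if_pos heu, hu0, hP0]
    · rfl
  rw [← Finset.sum_filter_of_ne hkill]
  refine Finset.sum_bij' (i := fun (ρ : α → ℕ) _ => fun v => ρ v - 1)
    (j := fun (ρ' : α → ℕ) _ => fun v => ρ' v + 1) ?_ ?_ ?_ ?_ ?_
  · intro ρ hρ
    simp only [Finset.mem_filter, Fintype.mem_piFinset, Finset.mem_range] at hρ ⊢
    intro v
    show ρ v - 1 < m + 1
    have := hρ.1 v; have := hρ.2 v; omega
  · intro ρ' hρ'
    simp only [Finset.mem_filter, Fintype.mem_piFinset, Finset.mem_range] at hρ' ⊢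
    constructor
    · intro v
      show ρ' v + 1 < m + 2
      have := hρ' v; omega
    · intro v
      show 1 ≤ ρ' v + 1
      omega
  · intro ρ hρ
    simp only [Finset.mem_filter, Fintype.mem_piFinset, Finset.mem_range] at hρ
    funext v
    show ρ v - 1 + 1 = ρ v
    have := hρ.2 v; omega
  · intro ρ' hρ'
    funext v
    show ρ' v + 1 - 1 = ρ' v
    omega
  · intro ρ hρ
    simp only [Finset.mem_filter, Fintype.mem_piFinset, Finset.mem_range] at hρ
    have hpos := hρ.2
    have hbd := hρ.1
    have hiff : nCond ht (m+1) ρ ↔ nCond ht m (fun v => ρ v - 1) := by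
      constructor
      · rintro ⟨⟨h1, h2⟩, h3⟩
        refine ⟨⟨?_, ?_⟩, ?_⟩
        · intro x y hxy
          show ρ x - 1 ≤ ρ y - 1
          have := h1 x y hxy; have := hpos x; have := hpos y; omega
        · intro x y hxy ho
          show ρ x - 1 < ρ y - 1
          have := h2 x y hxy ho; have := hpos x; have := hpos y; omega
        · intro v hv
          show ρ v - 1 < m
          have := h3 v hv; have := hpos v; omega
      · rintro ⟨⟨h1, h2⟩, h3⟩
        refine ⟨⟨?_, ?_⟩, ?_⟩
        · intro x y hxy
          have h := h1 x y hxy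
          have h' : ρ x - 1 ≤ ρ y - 1 := h
          have := hpos x; have := hpos y; omega
        · intro x y hxy ho
          have h := h2 x y hxy ho
          have h' : ρ x - 1 < ρ y - 1 := h
          have := hpos x; have := hpos y; omega
        · intro v hv
          have h := h3 v hv
          have h' : ρ v - 1 < m := h
          have := hpos v; omega
    rw [nTerm, nTerm]
    by_cases hc : nCond ht (m+1) ρ
    · rw [if_pos hc, if_pos (hiff.mp hc)]
      refine Finset.prod_congr rfl fun v _ => ?_
      show (if Even (ht v) then P (ρ v) else Q (ρ v))
        = if Even (ht v) then P' (ρ v - 1) else Q' (ρ v - 1)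
      have h1 : ρ v - 1 + 1 = ρ v := by have := hpos v; omega
      split_ifs with he
      · rw [hP _ (by have := hbd v; omega), h1]
      · have hv : Odd (ht v) := Nat.not_even_iff_odd.mp he
        rw [hQ _ (by have := hc.2 v hv; omega), h1]
    · rw [if_neg hc, if_neg (fun h => hc (hiff.mpr h))]

end S11
-- PART5 : existence properties E1 (vars), E2 (stability), E4 (evaluation)
namespace S11
set_option linter.unusedSectionVars false
set_option maxHeartbeats 1000000
variable {α : Type} [PartialOrder α] [Fintype α] {ht : α → ℕ}

lemma aeval_X_sub {S : Type} [CommRing S] [Algebra ℚ S] (g : ℕ → S) (a b : ℕ) :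
    aeval g (X a - X b : MvPolynomial ℕ ℚ) = g a - g b := by simp

lemma Fvars (m : ℕ) :
    (aeval (pqToX m) (NP α ht m)).vars ⊆ Finset.range (2 * m + 1) := by
  classical
  have hmem : aeval (pqToX m) (NP α ht m)
      ∈ MvPolynomial.supported ℚ (↑(Finset.range (2 * m + 1)) : Set ℕ) := by
    rw [aeval_NP]
    unfold wsum
    apply Subalgebra.sum_mem
    intro r _
    split_ifs with hc
    · apply Subalgebra.prod_mem
      intro v _
      split_ifs with he
      · -- p variable, label ≤ m
        have hr : (r v : ℕ) ≤ m := by have := (r v).isLt; omega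
        simp only [pqToX, Sum.elim_inl]
        split_ifs with hm
        · exact MvPolynomial.X_mem_supported.mpr (by simp only [Finset.coe_range, Set.mem_Iio]; omega)
        · exact Subalgebra.sub_mem _
            (MvPolynomial.X_mem_supported.mpr (by simp only [Finset.coe_range, Set.mem_Iio]; omega))
            (MvPolynomial.X_mem_supported.mpr (by simp only [Finset.coe_range, Set.mem_Iio]; omega))
      · -- q variable, label < m
        have hr : (r v : ℕ) < m := hc.2 v (Nat.odd_iff.mpr (by
          rcases Nat.even_or_odd (ht v) with h' | h'
          · exact absurd h' he
          · exact Nat.odd_iff.mp h'))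
        simp only [pqToX, Sum.elim_inr]
        exact Subalgebra.sub_mem _
          (MvPolynomial.X_mem_supported.mpr (by simp only [Finset.coe_range, Set.mem_Iio]; omega))
          (MvPolynomial.X_mem_supported.mpr (by simp only [Finset.coe_range, Set.mem_Iio]; omega))
    · exact Subalgebra.zero_mem _
  have := MvPolynomial.mem_supported.mp hmem
  exact fun x hx => by simpa using this hx

lemma Fstab (m : ℕ) :
    aeval (fun k => if k < 2 * m + 1 then (X k : MvPolynomial ℕ ℚ) else 0)
        (aeval (pqToX (m+1)) (NP α ht (m+1)))
      = aeval (pqToX m) (NP α ht m) := by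
  classical
  set z := fun k => if k < 2 * m + 1 then (X k : MvPolynomial ℕ ℚ) else 0 with hz
  rw [aeval_comp, aeval_NP, aeval_NP, wsum_eq_nsum, wsum_eq_nsum]
  rw [show (∑ ρ ∈ Fintype.piFinset (fun _ : α => Finset.range (m+1)),
      nTerm ht (fun k => pqToX m (Sum.inl k)) (fun k => pqToX m (Sum.inr k)) m ρ)
    = ∑ ρ ∈ Fintype.piFinset (fun _ : α => Finset.range (m+1)),
      nTerm ht (fun k => aeval z (pqToX (m+1) (Sum.inl k)))
        (fun k => aeval z (pqToX (m+1) (Sum.inr k))) m ρ from by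
    rw [← wsum_eq_nsum, ← wsum_eq_nsum]
    apply wsum_congr
    · intro j hj
      simp only [pqToX, Sum.elim_inl]
      split_ifs with h1 h2
      · omega
      · rw [aeval_X_sub]
        simp only [hz]
        rw [if_pos (by omega), if_neg (by omega), sub_zero, h1]
      · omega
      · rw [aeval_X_sub]
        simp only [hz]
        rw [if_pos (by omega), if_pos (by omega)]
    · intro j hj
      simp only [pqToX, Sum.elim_inr, aeval_X_sub]
      simp only [hz]
      rw [if_pos (by omega), if_pos (by omega)]]
  refine nsum_stab m _ _ ?_ ?_
  · have h1 : pqToX (m+1) (Sum.inl (m+1)) = X (2*(m+1)) := by simp [pqToX]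
    rw [h1, aeval_X]
    simp only [hz]
    rw [if_neg (by omega)]
  · have h1 : pqToX (m+1) (Sum.inr m) = X (2*m+1) - X (2*m+2) := by
      simp only [pqToX, Sum.elim_inr]
    rw [h1, aeval_X_sub]
    simp only [hz]
    rw [if_neg (by omega), if_neg (by omega), sub_zero]

lemma FP_eq (m : ℕ) :
    FP α ht m = ∑ ρ ∈ Fintype.piFinset (fun _ : α => Finset.range m),
      (if ocN ht ρ then ∏ v : α, (X (ρ v) : MvPolynomial ℕ ℚ) else 0) := by
  unfold FP
  rw [← sum_pi_fin m (fun ρ => if ocN ht ρ then ∏ v : α, (X (ρ v) : MvPolynomial ℕ ℚ) else 0)]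
  refine Finset.sum_congr rfl fun r _ => ?_
  simp only [orderCond_iff]

lemma Feval (m : ℕ) :
    aeval oddZero (aeval (pqToX m) (NP α ht m))
      = ((-1 : ℚ) ^ (Finset.univ.filter (fun v : α => Even (ht v))).card)
          • FP α ht m := by
  classical
  rw [aeval_comp, aeval_NP]
  rw [wsum_congr (α := α) (ht := ht) m _ _
    (fun k => if k = m then 0 else - X k) (fun k => (X k : MvPolynomial ℕ ℚ))
    (by
      intro j hj
      simp only [pqToX, Sum.elim_inl]
      split_ifs with h1
      · subst h1; simp [oddZero]
      · rw [aeval_X_sub]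
        simp only [oddZero]
        rw [if_pos (by omega), if_neg (by omega)]
        rw [show (2 * j + 1) / 2 = j from by omega, zero_sub])
    (by
      intro j hj
      simp only [pqToX, Sum.elim_inr, aeval_X_sub]
      simp only [oddZero]
      rw [if_neg (by omega), if_pos (by omega)]
      rw [show (2 * j + 1) / 2 = j from by omega, sub_zero])]
  rw [wsum_eq_nsum, nsum_eval m _ _ (by simp), FP_eq, Finset.smul_sum]
  refine Finset.sum_congr rfl fun ρ hρ => ?_
  simp only [Fintype.mem_piFinset, Finset.mem_range] at hρ
  split_ifs with hoc
  · rw [show (∏ v : α, if Even (ht v) then (if ρ v = m then (0:MvPolynomial ℕ ℚ) else - X (ρ v)) else X (ρ v))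
        = ∏ v : α, ((if Even (ht v) then (-1 : MvPolynomial ℕ ℚ) else 1) * X (ρ v)) from
      Finset.prod_congr rfl fun v _ => by
        have hne : ρ v ≠ m := by have := hρ v; omega
        by_cases he : Even (ht v)
        · rw [if_pos he, if_pos he, if_neg hne, neg_one_mul]
        · rw [if_neg he, if_neg he, one_mul]]
    rw [Finset.prod_mul_distrib, Finset.prod_ite, Finset.prod_const, Finset.prod_const,
      one_pow, mul_one, MvPolynomial.smul_eq_C_mul, map_pow, map_neg, map_one]
  · simp

end S11
-- PART6 : equation (E_x) for the standard family
namespace S11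
set_option linter.unusedSectionVars false
set_option maxHeartbeats 4000000
variable {α : Type} [PartialOrder α] [Fintype α] {ht : α → ℕ}

lemma aeval_ite (f : ℕ → MvPolynomial ℕ ℚ) (c : Prop) [Decidable c]
    (p q : MvPolynomial ℕ ℚ) :
    aeval f (if c then p else q) = if c then aeval f p else aeval f q :=
  apply_ite _ _ _ _

lemma FEx (hrk : IsRanked ht) (m i : ℕ) (hi : i < 2 * m + 2) :
    aeval (fun k => if k = i + 1 then (X i : MvPolynomial ℕ ℚ) else X k)
        (aeval (pqToX (m+1)) (NP α ht (m+1)))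
      = aeval (fun k => if k < i then (X k : MvPolynomial ℕ ℚ) else X (k + 2))
          (aeval (pqToX m) (NP α ht m)) := by
  classical
  rw [aeval_comp, aeval_comp, aeval_NP, aeval_NP, wsum_eq_nsum, wsum_eq_nsum]
  rcases Nat.even_or_odd i with he | ho
  · -- even case : i = 2c
    obtain ⟨c0, hc0⟩ := he
    have hc : i = 2 * c0 := by omega
    subst hc
    rcases Nat.eq_zero_or_pos c0 with rfl | hpos
    · -- c = 0 : merge0
      refine nsum_merge0 (m := m) hrk _ _ _ _ ?_ ?_ ?_
      · simp only [pqToX, Sum.elim_inl, aeval_ite, map_sub, aeval_X]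
        split_ifs <;> first | omega | exact False.elim (by assumption) | (subst_vars; ring_nf)
      · intro j hj
        simp only [pqToX, Sum.elim_inl, aeval_ite, map_sub, aeval_X]
        split_ifs <;> first | omega | exact False.elim (by assumption) | (subst_vars; ring_nf)
      · intro j hj
        simp only [pqToX, Sum.elim_inr, aeval_ite, map_sub, aeval_X]
        split_ifs <;> first | omega | exact False.elim (by assumption) | (subst_vars; ring_nf)
    · -- c ≥ 1 : mergeP
      obtain ⟨c, rfl⟩ : ∃ c, c0 = c + 1 := ⟨c0 - 1, by omega⟩
      refine nsum_mergeP (c := c + 1) (m := m) hrk (by omega) (by omega) _ _ _ _ ?_ ?_ ?_ ?_ ?_ ?_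
      · simp only [pqToX, Sum.elim_inl, aeval_ite, map_sub, aeval_X]
        split_ifs <;> first | omega | exact False.elim (by assumption) | (subst_vars; ring_nf)
      · intro j hj
        simp only [pqToX, Sum.elim_inl, aeval_ite, map_sub, aeval_X]
        split_ifs <;> first | omega | exact False.elim (by assumption) | (subst_vars; ring_nf)
      · intro j hj1 hj2
        simp only [pqToX, Sum.elim_inl, aeval_ite, map_sub, aeval_X]
        split_ifs <;> first | omega | exact False.elim (by assumption) | (subst_vars; ring_nf)
      · intro j hj
        simp only [pqToX, Sum.elim_inr, aeval_ite, map_sub, aeval_X]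
        split_ifs <;> first | omega | exact False.elim (by assumption) | (subst_vars; ring_nf)
      · simp only [Nat.add_sub_cancel, pqToX, Sum.elim_inr, aeval_ite, map_sub, aeval_X]
        split_ifs <;> first | omega | exact False.elim (by assumption) | (subst_vars; ring_nf)
      · intro j hj1 hj2
        simp only [pqToX, Sum.elim_inr, aeval_ite, map_sub, aeval_X]
        split_ifs <;> first | omega | exact False.elim (by assumption) | (subst_vars; ring_nf)
  · -- odd case : i = 2c+1 : mergeQ
    obtain ⟨c, hc⟩ := ho
    subst hc
    refine nsum_mergeQ (c := c) (m := m) hrk (show c ≤ m by omega) _ _ _ _ ?_ ?_ ?_ ?_ ?_ ?_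
    · simp only [pqToX, Sum.elim_inr, aeval_ite, map_sub, aeval_X]
      split_ifs <;> first | omega | exact False.elim (by assumption) | (subst_vars; ring_nf)
    · intro j hj
      simp only [pqToX, Sum.elim_inl, aeval_ite, map_sub, aeval_X]
      split_ifs <;> first | omega | exact False.elim (by assumption) | (subst_vars; ring_nf)
    · simp only [pqToX, Sum.elim_inl, aeval_ite, map_sub, aeval_X]
      split_ifs <;> first | omega | exact False.elim (by assumption) | (subst_vars; ring_nf)
    · intro j hj1 hj2
      simp only [pqToX, Sum.elim_inl, aeval_ite, map_sub, aeval_X]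
      split_ifs <;> first | omega | exact False.elim (by assumption) | (subst_vars; ring_nf)
    · intro j hj
      simp only [pqToX, Sum.elim_inr, aeval_ite, map_sub, aeval_X]
      split_ifs <;> first | omega | exact False.elim (by assumption) | (subst_vars; ring_nf)
    · intro j hj1 hj2
      simp only [pqToX, Sum.elim_inr, aeval_ite, map_sub, aeval_X]
      split_ifs <;> first | omega | exact False.elim (by assumption) | (subst_vars; ring_nf)

end S11
-- PART7 : coefficient lemmas
namespace S11
set_option linter.unusedSectionVars false
set_option maxHeartbeats 1000000

lemma mapDomain_eq_self {f : ℕ → ℕ} (μ : ℕ →₀ ℕ) (h : ∀ x ∈ μ.support, f x = x) :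
    Finsupp.mapDomain f μ = μ := by
  rw [Finsupp.mapDomain_congr (g := id) h, Finsupp.mapDomain_id]

lemma decomp (i : ℕ) (μ : ℕ →₀ ℕ) :
    μ = (μ.erase i).erase (i+1) + Finsupp.single i (μ i) + Finsupp.single (i+1) (μ (i+1)) := by
  ext k
  simp only [Finsupp.add_apply, Finsupp.erase_apply, Finsupp.single_apply]
  by_cases h1 : k = i
  · subst h1
    rw [if_neg (by omega), if_pos rfl, if_pos rfl, if_neg (by omega)]
    omega
  · by_cases h2 : k = i + 1
    · subst h2
      rw [if_pos rfl, if_neg (by omega), if_pos rfl]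
      omega
    · rw [if_neg h2, if_neg h1, if_neg (fun h => h1 h.symm), if_neg (fun h => h2 h.symm)]
      omega

lemma mapDomain_collapse (i : ℕ) (μ : ℕ →₀ ℕ) :
    Finsupp.mapDomain (fun k => if k = i+1 then i else k) μ
      = (μ.erase i).erase (i+1) + Finsupp.single i (μ i + μ (i+1)) := by
  conv_lhs => rw [decomp i μ]
  rw [Finsupp.mapDomain_add, Finsupp.mapDomain_add, Finsupp.mapDomain_single,
    Finsupp.mapDomain_single]
  rw [mapDomain_eq_self _ (fun x hx => by
    have : x ≠ i + 1 := by
      intro h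
      subst h
      simp [Finsupp.mem_support_iff, Finsupp.erase_apply] at hx
    exact if_neg this)]
  rw [if_neg (by omega : ¬ i = i + 1), if_pos rfl, add_assoc, Finsupp.single_add]

lemma coeff_rename_collapse (p : MvPolynomial ℕ ℚ) (i t : ℕ) (μ₀ : ℕ →₀ ℕ)
    (h0 : μ₀ i = 0) (h1 : μ₀ (i+1) = 0) :
    coeff (μ₀ + Finsupp.single i t) (rename (fun k => if k = i+1 then i else k) p)
      = ∑ a ∈ Finset.range (t+1),
          coeff (μ₀ + Finsupp.single i a + Finsupp.single (i+1) (t-a)) p := by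
  classical
  conv_lhs => rw [p.as_sum]
  rw [map_sum, MvPolynomial.coeff_sum]
  have hrhs : ∀ a ∈ Finset.range (t+1),
      coeff (μ₀ + Finsupp.single i a + Finsupp.single (i+1) (t-a)) p
        = ∑ μ ∈ p.support, coeff (μ₀ + Finsupp.single i a + Finsupp.single (i+1) (t-a))
            ((monomial μ) (coeff μ p)) := by
    intro a _
    conv_lhs => rw [p.as_sum]
    rw [MvPolynomial.coeff_sum]
  rw [Finset.sum_congr rfl hrhs, Finset.sum_comm]
  refine Finset.sum_congr rfl fun μ _ => ?_
  rw [rename_monomial, coeff_monomial]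
  have hμ0i : ((μ.erase i).erase (i+1)) i = 0 := by
    simp [Finsupp.erase_apply]
  have hμ0i1 : ((μ.erase i).erase (i+1)) (i+1) = 0 := by
    simp [Finsupp.erase_apply]
  by_cases hL : Finsupp.mapDomain (fun k => if k = i+1 then i else k) μ
      = μ₀ + Finsupp.single i t
  · rw [if_pos hL]
    rw [mapDomain_collapse] at hL
    have hti : μ i + μ (i+1) = t := by
      have := congrArg (fun f : ℕ →₀ ℕ => f i) hL
      simpa [Finsupp.add_apply, Finsupp.single_apply, hμ0i, h0] using this
    have hrest : (μ.erase i).erase (i+1) = μ₀ := by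
      have : (μ.erase i).erase (i+1) + Finsupp.single i (μ i + μ (i+1))
          = μ₀ + Finsupp.single i t := hL
      rw [hti] at this
      exact add_right_cancel this
    have hμeq : μ = μ₀ + Finsupp.single i (μ i) + Finsupp.single (i+1) (t - μ i) := by
      conv_lhs => rw [decomp i μ]
      rw [hrest]
      have h2 : μ (i + 1) = t - μ i := by omega
      rw [h2]
    rw [Finset.sum_eq_single_of_mem (μ i) (Finset.mem_range.mpr (by omega))
      (fun a _ ha => by
        rw [coeff_monomial, if_neg]
        intro hF
        apply ha
        have h2 := congrArg (fun f : ℕ →₀ ℕ => f i) hF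
        exact (by simpa [Finsupp.add_apply, Finsupp.single_apply, h0] using h2 : μ i = a).symm)]
    rw [coeff_monomial, if_pos hμeq]
  · rw [if_neg hL]
    symm
    refine Finset.sum_eq_zero fun a ha => ?_
    rw [coeff_monomial, if_neg]
    intro hF
    apply hL
    subst hF
    rw [Finsupp.mapDomain_add, Finsupp.mapDomain_add, Finsupp.mapDomain_single,
      Finsupp.mapDomain_single]
    rw [mapDomain_eq_self μ₀ (fun x hx => by
      have : x ≠ i + 1 := by
        intro h
        subst h
        exact (Finsupp.mem_support_iff.mp hx) h1
      exact if_neg this)]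
    have hat : a + (t - a) = t := by
      simp only [Finset.mem_range] at ha
      omega
    rw [if_neg (by omega : ¬ i = i + 1), if_pos rfl, add_assoc, ← Finsupp.single_add, hat]

lemma coeff_rename_dead (q : MvPolynomial ℕ ℚ) (i : ℕ) (e : ℕ →₀ ℕ) (he : e i ≠ 0) :
    coeff e (rename (fun k => if k < i then k else k + 2) q) = 0 := by
  apply MvPolynomial.coeff_rename_eq_zero
  intro u hu
  exfalso
  apply he
  rw [← hu]
  apply Finsupp.mapDomain_notin_range
  rintro ⟨x, hx⟩
  have hx' : (if x < i then x else x + 2) = i := hx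
  split_ifs at hx' <;> omega

lemma coeff_oddZero (p : MvPolynomial ℕ ℚ) (e : ℕ →₀ ℕ) (he : ∀ k ∈ e.support, k % 2 = 1) :
    coeff (Finsupp.mapDomain (fun k => k / 2) e) (aeval oddZero p) = coeff e p := by
  classical
  have hinj : ∀ ν : ℕ →₀ ℕ, (∀ k ∈ ν.support, k % 2 = 1) →
      Finsupp.mapDomain (fun n => 2*n+1) (Finsupp.mapDomain (fun k => k / 2) ν) = ν := by
    intro ν hν
    rw [← Finsupp.mapDomain_comp]
    exact mapDomain_eq_self _ (fun x hx => by
      have := hν x hx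
      simp only [Function.comp]
      omega)
  conv_lhs => rw [p.as_sum]
  conv_rhs => rw [p.as_sum]
  rw [map_sum, MvPolynomial.coeff_sum, MvPolynomial.coeff_sum]
  refine Finset.sum_congr rfl fun μ _ => ?_
  rw [coeff_monomial]
  by_cases hμ : ∀ k ∈ μ.support, k % 2 = 1
  · have hren : aeval oddZero ((monomial μ) (coeff μ p))
        = rename (fun k => k / 2) ((monomial μ) (coeff μ p)) := by
      rw [aeval_monomial, rename_monomial, MvPolynomial.monomial_eq]
      congr 1
      rw [Finsupp.prod_mapDomain_index (fun b => pow_zero _) (fun b m1 m2 => pow_add _ _ _)]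
      refine Finsupp.prod_congr fun x hx => ?_
      have := hμ x hx
      show oddZero x ^ μ x = X (x / 2) ^ μ x
      rw [show oddZero x = X (x / 2) from by
        simp only [oddZero]
        rw [if_neg (by omega)]]
    rw [hren, rename_monomial, coeff_monomial]
    by_cases hμe : μ = e
    · subst hμe
      rw [if_pos rfl, if_pos rfl]
    · rw [if_neg hμe, if_neg (fun h => hμe (by
        have h2 := congrArg (Finsupp.mapDomain (fun n => 2*n+1)) h
        rwa [hinj μ hμ, hinj e he] at h2))]
  · push_neg at hμ
    obtain ⟨k, hk, hke⟩ := hμ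
    have hdead : aeval oddZero ((monomial μ) (coeff μ p)) = 0 := by
      rw [aeval_monomial]
      have : (μ.prod fun n e => oddZero n ^ e) = 0 := by
        apply Finset.prod_eq_zero hk
        show oddZero k ^ μ k = 0
        rw [show oddZero k = 0 from by
          simp only [oddZero]
          rw [if_pos (by omega)]]
        exact zero_pow (Finsupp.mem_support_iff.mp hk)
      rw [this, mul_zero]
    rw [hdead]
    have : μ ≠ e := by
      intro h
      subst h
      exact absurd (he k hk) (by omega)
    rw [if_neg this]
    simp

end S11
-- PART8 : weight function and the main theorem
namespace S11
set_option linter.unusedSectionVars false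
set_option maxHeartbeats 1000000

/-- even weight of a monomial -/
def W (e : ℕ →₀ ℕ) : ℕ := e.sum fun k v => if k % 2 = 0 then v else 0

lemma W_add (x y : ℕ →₀ ℕ) : W (x + y) = W x + W y :=
  Finsupp.sum_add_index' (fun a => by split_ifs <;> rfl)
    (fun a b1 b2 => by split_ifs <;> omega)

lemma W_single (k v : ℕ) : W (Finsupp.single k v) = if k % 2 = 0 then v else 0 :=
  Finsupp.sum_single_index (by split_ifs <;> rfl)

lemma W_mapDomain {τ : ℕ → ℕ} (hpar : ∀ k, τ k % 2 = k % 2) (e : ℕ →₀ ℕ) :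
    W (Finsupp.mapDomain τ e) = W e := by
  unfold W
  rw [Finsupp.sum_mapDomain_index (fun b => by split_ifs <;> rfl)
    (fun b m1 m2 => by split_ifs <;> omega)]
  exact Finsupp.sum_congr fun x _ => by rw [hpar x]

lemma W_pos_exists {e : ℕ →₀ ℕ} (h : W e ≠ 0) :
    ∃ i ∈ e.support, i % 2 = 0 ∧ e i ≠ 0 := by
  obtain ⟨i, hi, hne⟩ := Finset.exists_ne_zero_of_sum_ne_zero h
  refine ⟨i, hi, ?_, Finsupp.mem_support_iff.mp hi⟩
  by_contra h2
  have hne' : (if i % 2 = 0 then e i else 0) ≠ 0 := hne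
  rw [if_neg h2] at hne'
  exact hne' rfl

lemma W_zero_odd {e : ℕ →₀ ℕ} (h : W e = 0) : ∀ k ∈ e.support, k % 2 = 1 := by
  intro k hk
  by_contra hk2
  have hk0 : k % 2 = 0 := by omega
  have h1 : (if k % 2 = 0 then e k else 0) ≤ W e :=
    Finset.single_le_sum (f := fun k => if k % 2 = 0 then e k else 0)
      (fun _ _ => Nat.zero_le _) hk
  rw [if_pos hk0] at h1
  have h2 : e k ≠ 0 := Finsupp.mem_support_iff.mp hk
  omega

end S11

/-- For a finite ranked poset `P`, the family obtained from the
`N_P^(m)` by the substitution (⋆) is the unique stable x-family satisfying (E_x) whose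
evaluation at `(0,y₁,0,…,0,y_m,0)` equals `(-1)^{|V₀|} · F_P^(m)(y₁,…,y_m)` for all `m`. -/
theorem stmt11 (α : Type) [Fintype α] [PartialOrder α] (ht : α → ℕ) (hrk : IsRanked ht) :
    (IsStableX (fun m => aeval (pqToX m) (NP α ht m)) ∧
      SatisfiesEx (fun m => aeval (pqToX m) (NP α ht m)) ∧
      ∀ m, aeval oddZero (aeval (pqToX m) (NP α ht m)) =
        ((-1 : ℚ) ^ (Finset.univ.filter (fun v : α => Even (ht v))).card) • FP α ht m) ∧
    ∀ f : ℕ → MvPolynomial ℕ ℚ, IsStableX f → SatisfiesEx f →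
      (∀ m, aeval oddZero (f m) =
        ((-1 : ℚ) ^ (Finset.univ.filter (fun v : α => Even (ht v))).card) • FP α ht m) →
      ∀ m, f m = aeval (pqToX m) (NP α ht m) := by
  classical
  have hstable : IsStableX (fun m => aeval (pqToX m) (NP α ht m)) :=
    ⟨fun m => S11.Fvars m, fun m => S11.Fstab m⟩
  have hex : SatisfiesEx (fun m => aeval (pqToX m) (NP α ht m)) :=
    fun m i hi => S11.FEx hrk m i hi
  have hev : ∀ m, aeval oddZero (aeval (pqToX m) (NP α ht m)) =
      ((-1 : ℚ) ^ (Finset.univ.filter (fun v : α => Even (ht v))).card) • FP α ht m :=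
    fun m => S11.Feval m
  refine ⟨⟨hstable, hex, hev⟩, ?_⟩
  intro f hf hfex hfev
  set Ff : ℕ → MvPolynomial ℕ ℚ := fun m => aeval (pqToX m) (NP α ht m) with hFf
  set d : ℕ → MvPolynomial ℕ ℚ := fun m => f m - Ff m with hd
  -- rename conversions
  have hrw1 : ∀ (j : ℕ) (p : MvPolynomial ℕ ℚ),
      aeval (fun k => if k = j+1 then (X j : MvPolynomial ℕ ℚ) else X k) p
        = rename (fun k => if k = j+1 then j else k) p := by
    intro j p
    rw [show (fun k => if k = j+1 then (X j : MvPolynomial ℕ ℚ) else X k)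
        = (X ∘ (fun k => if k = j+1 then j else k)) from by
      funext k
      by_cases h : k = j+1 <;> simp [h, Function.comp]]
    exact DFunLike.congr_fun (MvPolynomial.algHom_ext (fun k => by simp)) p
  have hrw2 : ∀ (j : ℕ) (p : MvPolynomial ℕ ℚ),
      aeval (fun k => if k < j then (X k : MvPolynomial ℕ ℚ) else X (k+2)) p
        = rename (fun k => if k < j then k else k + 2) p := by
    intro j p
    rw [show (fun k => if k < j then (X k : MvPolynomial ℕ ℚ) else X (k+2))
        = (X ∘ (fun k => if k < j then k else k + 2)) from by
      funext k
      by_cases h : k < j <;> simp [h, Function.comp]]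
    exact DFunLike.congr_fun (MvPolynomial.algHom_ext (fun k => by simp)) p
  have hdvars : ∀ m, (d m).vars ⊆ Finset.range (2*m+1) := by
    intro m k hk
    rcases Finset.mem_union.mp (MvPolynomial.vars_sub_subset (f m) hk) with h | h
    · exact hf.1 m h
    · exact hstable.1 m h
  have hdEx : ∀ mm j, j < 2*mm+2 →
      rename (fun k => if k = j+1 then j else k) (d (mm+1))
        = rename (fun k => if k < j then k else k + 2) (d mm) := by
    intro mm j hj
    have h1 := hfex mm j hj
    have h2 := hex mm j hj
    show rename _ (f (mm+1) - Ff (mm+1)) = rename _ (f mm - Ff mm)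
    rw [map_sub, map_sub, ← hrw1 j (f (mm+1)), ← hrw1 j (Ff (mm+1)),
      ← hrw2 j (f mm), ← hrw2 j (Ff mm), h1, h2]
  have hdev : ∀ mm, aeval oddZero (d mm) = 0 := by
    intro mm
    show aeval oddZero (f mm - Ff mm) = 0
    rw [map_sub, hfev mm, hev mm, sub_self]
  have hzero : ∀ n m' (e : ℕ →₀ ℕ), S11.W e = n → coeff e (d m') = 0 := by
    intro n
    induction n using Nat.strong_induction_on with
    | _ n IH =>
      intro m e hW
      by_cases hsupp : ∀ k ∈ e.support, k < 2*m+1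
      · rcases Nat.eq_zero_or_pos n with rfl | hn
        · -- all support odd
          have hodd := S11.W_zero_odd hW
          have h1 := S11.coeff_oddZero (d m) e hodd
          rw [hdev m] at h1
          simpa using h1.symm
        · obtain ⟨i, hisupp, hieven, hipos⟩ := S11.W_pos_exists (by omega : S11.W e ≠ 0)
          have hi2m : i ≤ 2*m := by have := hsupp i hisupp; omega
          set τ : ℕ → ℕ := fun k => if k < i+1 then k else k + 2 with hτ
          have hτinj : Function.Injective τ := by
            intro a b hab
            simp only [hτ] at hab
            split_ifs at hab <;> omega
          have hτpar : ∀ k, τ k % 2 = k % 2 := by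
            intro k
            simp only [hτ]
            split_ifs <;> omega
          set e' : ℕ →₀ ℕ := Finsupp.mapDomain τ e with he'
          have he'i : e' i = e i := by
            have h0 := Finsupp.mapDomain_apply hτinj e i
            rwa [show τ i = i from by simp [hτ]] at h0
          have he'i1 : e' (i+1) = 0 := by
            apply Finsupp.mapDomain_notin_range
            rintro ⟨x, hx⟩
            have hx' : (if x < i+1 then x else x + 2) = i + 1 := hx
            split_ifs at hx' <;> omega
          have he'i2 : e' (i+1+1) = 0 := by
            apply Finsupp.mapDomain_notin_range
            rintro ⟨x, hx⟩
            have hx' : (if x < i+1 then x else x + 2) = i + 1 + 1 := hx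
            split_ifs at hx' <;> omega
          have hWe' : S11.W e' = S11.W e := S11.W_mapDomain hτpar e
          -- Step A
          have hA : coeff e' (d (m+1)) = coeff e (d m) := by
            have hR : coeff e' (rename (fun k => if k < i+1 then k else k + 2) (d m))
                = coeff e (d m) := MvPolynomial.coeff_rename_mapDomain _ hτinj (d m) e
            have hL := S11.coeff_rename_collapse (d (m+1)) (i+1) 0 e' he'i1 he'i2
            simp only [zero_add, Finset.sum_range_one, Nat.sub_self, Nat.zero_sub,
              Finsupp.single_zero, add_zero] at hL
            rw [hdEx m (i+1) (by omega)] at hL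
            rw [← hL, hR]
          -- Step B
          set t := e i with hti
          set μ₀ := e'.erase i with hμ₀
          have hμ0i : μ₀ i = 0 := by simp [hμ₀, Finsupp.erase_apply]
          have hμ0i1 : μ₀ (i+1) = 0 := by
            simp [hμ₀, Finsupp.erase_apply, he'i1]
          have he'decomp : μ₀ + Finsupp.single i t = e' := by
            rw [add_comm, hμ₀, ← he'i]
            exact Finsupp.single_add_erase i e'
          have hsum := S11.coeff_rename_collapse (d (m+1)) i t μ₀ hμ0i hμ0i1
          have hdead : coeff (μ₀ + Finsupp.single i t)
              (rename (fun k => if k < i then k else k + 2) (d m)) = 0 := by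
            apply S11.coeff_rename_dead
            rw [Finsupp.add_apply, hμ0i, Finsupp.single_apply, if_pos rfl]
            simpa [hti] using hipos
          rw [hdEx m i (by omega), hdead] at hsum
          rw [Finset.sum_range_succ] at hsum
          have hterm : μ₀ + Finsupp.single i t + Finsupp.single (i+1) (t - t) = e' := by
            rw [Nat.sub_self, Finsupp.single_zero, add_zero, he'decomp]
          rw [hterm, hA] at hsum
          have hWμ : S11.W μ₀ + t = n := by
            have h1 : S11.W e' = S11.W μ₀ + t := by
              rw [← he'decomp, S11.W_add, S11.W_single, if_pos hieven]
            omega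
          have hsmall : ∀ a ∈ Finset.range t,
              coeff (μ₀ + Finsupp.single i a + Finsupp.single (i+1) (t-a)) (d (m+1)) = 0 := by
            intro a ha
            simp only [Finset.mem_range] at ha
            refine IH (S11.W (μ₀ + Finsupp.single i a + Finsupp.single (i+1) (t-a)))
              ?_ (m+1) _ rfl
            rw [S11.W_add, S11.W_add, S11.W_single, S11.W_single, if_pos hieven,
              if_neg (by omega : ¬ (i+1) % 2 = 0)]
            omega
          rw [Finset.sum_eq_zero hsmall, zero_add] at hsum
          exact hsum.symm
      · by_contra hne
        push_neg at hsupp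
        obtain ⟨k, hk, hk2⟩ := hsupp
        have h1 : k ∈ (d m).vars :=
          (MvPolynomial.mem_vars k).mpr ⟨e, MvPolynomial.mem_support_iff.mpr hne, hk⟩
        have h2 := hdvars m h1
        rw [Finset.mem_range] at h2
        omega
  intro m
  have hdm : d m = 0 := by
    apply MvPolynomial.ext
    intro e
    rw [MvPolynomial.coeff_zero]
    exact hzero (S11.W e) m e rfl
  have : f m - Ff m = 0 := hdm
  exact sub_eq_zero.mp this
end
end

section
/- Let P be a labeled ranked poset on n elements, let m ≥ 1 and 1 ≤ i ≤ m, and let A_m denote the free ℚ-algebra on noncommuting generators b₁,…,b_{m+1},d₁,…,d_m. Then: (i) the image of 𝐍_P^(m) under the algebra endomorphism of A_m sending d_i to 0 and fixing all other generators equals the image of 𝐍_P^(m−1) under the algebra homomorphism A_{m−1} → A_m sending b_j ↦ b_j for j < i, b_i ↦ b_i + b_{i+1}, b_j ↦ b_{j+1} for i < j ≤ m, d_j ↦ d_j for j < i, and d_j ↦ d_{j+1} for i ≤ j ≤ m−1; and (ii) the image of 𝐍_P^(m) under the algebra endomorphism of A_m sending b_i to 0 and fixing all other generators equals the image of 𝐍_P^(m−1)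 under the algebra homomorphism A_{m−1} → A_m sending b_j ↦ b_j for j < i, b_j ↦ b_{j+1} for i ≤ j ≤ m, d_j ↦ d_j for j ≤ i−2, d_{i−1} ↦ d_{i−1} + d_i, and d_j ↦ d_{j+1} for i ≤ j ≤ m−1, where for i = 1 the homomorphism in (ii) sends b_j ↦ b_{j+1} for all 1 ≤ j ≤ m and d_j ↦ d_{j+1} for all 1 ≤ j ≤ m−1. -/
open scoped Classical

noncomputable section

/-- The free `ℚ`-algebra on noncommuting generators `a₁, a₂, …` (generator `j` is `a_{j+1}`). -/
abbrev NC1 : Type := MonoidAlgebra ℚ (FreeMonoid ℕ)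

/-- The free `ℚ`-algebra on two alphabets of noncommuting generators:
`Sum.inl j` is `b_{j+1}` and `Sum.inr j` is `d_{j+1}`. -/
abbrev NC2 : Type := MonoidAlgebra ℚ (FreeMonoid (ℕ ⊕ ℕ))

/-- The order condition for `r : Fin n → Fin N` with respect to a partial order `le`
and rank function `ht` on `{1,…,n}` (represented as `Fin n`). -/
def NCOrderCond {n N : ℕ} (le : Fin n → Fin n → Prop) (ht : Fin n → ℕ)
    (r : Fin n → Fin N) : Prop :=
  (∀ x y, le x y → r x ≤ r y) ∧ ∀ x y, le x y → x ≠ y → Odd (ht x) → r x < r y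

/-- `(le, ht)` is a labeled ranked poset structure on `Fin n`: `le` is a partial order,
minimal elements have height `0`, and covering relations increase the height by one. -/
def IsLRPoset {n : ℕ} (le : Fin n → Fin n → Prop) (ht : Fin n → ℕ) : Prop :=
  (∀ x, le x x) ∧ (∀ x y z, le x y → le y z → le x z) ∧
    (∀ x y, le x y → le y x → x = y) ∧
    (∀ x, (∀ y, le y x → y = x) → ht x = 0) ∧
    ∀ x y, le x y → x ≠ y → (∀ z, le x z → le z y → z = x ∨ z = y) → ht y = ht x + 1

/-- The noncommutative generating function `𝐅_P^(N)` (generator `j` is `a_{j+1}`). -/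
def ncF {n : ℕ} (le : Fin n → Fin n → Prop) (ht : Fin n → ℕ) (N : ℕ) : NC1 :=
  ∑ r : Fin n → Fin N,
    if NCOrderCond le ht r then
      MonoidAlgebra.of ℚ (FreeMonoid ℕ) (FreeMonoid.ofList (List.ofFn fun i => (r i : ℕ)))
    else 0

/-- The noncommutative generating function `𝐍_P^(m)` in the two alphabets `b`, `d`. -/
def ncN {n : ℕ} (le : Fin n → Fin n → Prop) (ht : Fin n → ℕ) (m : ℕ) : NC2 :=
  ∑ r : Fin n → Fin (m + 1),
    if NCOrderCond le ht r ∧ ∀ i, Odd (ht i) → (r i : ℕ) < m then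
      MonoidAlgebra.of ℚ (FreeMonoid (ℕ ⊕ ℕ)) (FreeMonoid.ofList (List.ofFn fun i =>
        if Even (ht i) then (Sum.inl (r i : ℕ) : ℕ ⊕ ℕ) else Sum.inr (r i : ℕ)))
    else 0

/-- The generator `a_{j+1}` of `NC1`. -/
def genA (j : ℕ) : NC1 := MonoidAlgebra.of ℚ (FreeMonoid ℕ) (FreeMonoid.of j)

/-- The generator `b_{j+1}` (for `Sum.inl j`) or `d_{j+1}` (for `Sum.inr j`) of `NC2`. -/
def bd (s : ℕ ⊕ ℕ) : NC2 := MonoidAlgebra.of ℚ (FreeMonoid (ℕ ⊕ ℕ)) (FreeMonoid.of s)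

/-- The `ℚ`-algebra homomorphism of `NC1` substituting `φ j` for the generator `a_{j+1}`. -/
def ncSubst1 (φ : ℕ → NC1) : NC1 →ₐ[ℚ] NC1 :=
  MonoidAlgebra.lift ℚ NC1 (FreeMonoid ℕ) (FreeMonoid.lift φ)

/-- The `ℚ`-algebra homomorphism of `NC2` substituting `φ s` for the generator `bd s`. -/
def ncSubst2 (φ : ℕ ⊕ ℕ → NC2) : NC2 →ₐ[ℚ] NC2 :=
  MonoidAlgebra.lift ℚ NC2 (FreeMonoid (ℕ ⊕ ℕ)) (FreeMonoid.lift φ)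

/-- A set composition `(K₀,…,K_{ℓ-1})` of `{1,…,n}`, encoded as a surjection
`Fin n → Fin ℓ` sending each element to the index of its block. -/
abbrev SetComp (n : ℕ) : Type :=
  {c : Σ ℓ : Fin (n + 1), Fin n → Fin ℓ // Function.Surjective c.2}

instance (n : ℕ) : Fintype (SetComp n) := Fintype.ofFinite _

/-- The rank function of the labeled ranked poset `P_K`: `ht i = s` for `i ∈ K_s`. -/
def SetComp.ht {n : ℕ} (K : SetComp n) (i : Fin n) : ℕ := (K.1.2 i : ℕ)

/-- The partial order of the labeled ranked poset `P_K`: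
`i ≤ j` iff `i = j` or `i` lies in an earlier block than `j`. -/
def SetComp.le {n : ℕ} (K : SetComp n) (x y : Fin n) : Prop := x = y ∨ K.1.2 x < K.1.2 y

/-- The order of the disjoint union `P ⊕ Q` on `Fin (n + n')`. -/
def sumLe {n n' : ℕ} (leP : Fin n → Fin n → Prop) (leQ : Fin n' → Fin n' → Prop)
    (x y : Fin (n + n')) : Prop :=
  (∃ (hx : (x : ℕ) < n) (hy : (y : ℕ) < n), leP ⟨x, hx⟩ ⟨y, hy⟩) ∨
  (∃ (_ : n ≤ (x : ℕ)) (_ : n ≤ (y : ℕ)),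
    leQ ⟨(x : ℕ) - n, by have := x.isLt; omega⟩ ⟨(y : ℕ) - n, by have := y.isLt; omega⟩)

/-- The rank function of the disjoint union `P ⊕ Q` on `Fin (n + n')`. -/
def sumHt {n n' : ℕ} (htP : Fin n → ℕ) (htQ : Fin n' → ℕ) (x : Fin (n + n')) : ℕ :=
  if h : (x : ℕ) < n then htP ⟨x, h⟩ else htQ ⟨(x : ℕ) - n, by have := x.isLt; omega⟩

section Poset
variable {n : ℕ} {le : Fin n → Fin n → Prop} {ht : Fin n → ℕ}

lemma lrp_cov (hP : IsLRPoset le ht) {x y : Fin n} (hxy : le x y) (hne : x ≠ y) :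
    ∃ z, le x z ∧ le z y ∧ z ≠ x ∧ ht z = ht x + 1 := by
  obtain ⟨hrefl, htrans, hanti, hmin, hcov⟩ := hP
  classical
  set S : Finset (Fin n) := Finset.univ.filter (fun z => le x z ∧ z ≠ x ∧ le z y) with hS
  have hyS : y ∈ S := by simp [hS, hxy, hne.symm, hrefl]
  obtain ⟨z, hzS, hzmin⟩ := Finset.exists_min_image S
    (fun z => (Finset.univ.filter (fun w => le w z)).card) ⟨y, hyS⟩
  simp only [hS, Finset.mem_filter, Finset.mem_univ, true_and] at hzS
  obtain ⟨hxz, hznex, hzy⟩ := hzS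
  refine ⟨z, hxz, hzy, hznex, hcov x z hxz (fun h => hznex h.symm) ?_⟩
  intro u hxu huz
  by_contra hcontra
  push_neg at hcontra
  obtain ⟨hux, huz'⟩ := hcontra
  have huS : u ∈ S := by simp [hS, hxu, hux, htrans u z y huz hzy]
  have hlt : (Finset.univ.filter (fun w => le w u)).card
      < (Finset.univ.filter (fun w => le w z)).card := by
    apply Finset.card_lt_card
    constructor
    · intro w hw
      simp only [Finset.mem_filter, Finset.mem_univ, true_and] at hw ⊢
      exact htrans w u z hw huz
    · intro hsub
      have := hsub (by simp [hrefl] : z ∈ Finset.univ.filter (fun w => le w z))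
      simp only [Finset.mem_filter, Finset.mem_univ, true_and] at this
      exact huz' (hanti u z huz this)
  exact absurd (hzmin u huS) (by omega)

lemma lrp_ht_lt (hP : IsLRPoset le ht) {x y : Fin n} (hxy : le x y) (hne : x ≠ y) :
    ht x < ht y := by
  classical
  obtain ⟨hrefl, htrans, hanti, hmin, hcov⟩ := hP
  set f : Fin n → ℕ := fun t => (Finset.univ.filter (fun w => le w t)).card with hf
  suffices h : ∀ k x y, le x y → x ≠ y → f y - f x = k → ht x < ht y by
    exact h _ x y hxy hne rfl
  intro k
  induction k using Nat.strong_induction_on with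
  | _ k ihk =>
    intro x y hxy hne hk
    obtain ⟨z, hxz, hzy, hzx, hht⟩ := lrp_cov ⟨hrefl, htrans, hanti, hmin, hcov⟩ hxy hne
    rcases eq_or_ne z y with rfl | hzy'
    · omega
    have hfxz : f x < f z := by
      apply Finset.card_lt_card
      constructor
      · intro w hw
        simp only [Finset.mem_filter, Finset.mem_univ, true_and] at hw ⊢
        exact htrans w x z hw hxz
      · intro hsub
        have := hsub (by simp [hrefl] : z ∈ Finset.univ.filter (fun w => le w z))
        simp only [Finset.mem_filter, Finset.mem_univ, true_and] at this
        exact hzx (hanti z x this hxz)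
    have hfzy : f z ≤ f y := by
      apply Finset.card_le_card
      intro w hw
      simp only [Finset.mem_filter, Finset.mem_univ, true_and] at hw ⊢
      exact htrans w z y hw hzy
    have hfxy : f x < f y := lt_of_lt_of_le hfxz hfzy
    have := ihk (f y - f z) (by omega) z y hzy hzy' rfl
    omega

lemma lrp_odd_pos (hP : IsLRPoset le ht) {x : Fin n} (hx : Odd (ht x)) :
    ∃ y, le y x ∧ y ≠ x := by
  by_contra h
  push_neg at h
  have := hP.2.2.2.1 x (fun y hy => by
    by_contra hne; exact absurd (h y hy) (by simp [hne]))
  simp [this, Nat.odd_iff] at hx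
end Poset

section Poset2
variable {n : ℕ} {le : Fin n → Fin n → Prop} {ht : Fin n → ℕ}

lemma lrp_min_below (hP : IsLRPoset le ht) (x : Fin n) :
    ∃ y, le y x ∧ ht y = 0 := by
  classical
  obtain ⟨hrefl, htrans, hanti, hmin, hcov⟩ := hP
  set S : Finset (Fin n) := Finset.univ.filter (fun z => le z x) with hS
  obtain ⟨y, hyS, hymin⟩ := Finset.exists_min_image S
    (fun z => (Finset.univ.filter (fun w => le w z)).card) ⟨x, by simp [hS, hrefl]⟩
  simp only [hS, Finset.mem_filter, Finset.mem_univ, true_and] at hyS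
  refine ⟨y, hyS, hmin y ?_⟩
  intro u huy
  by_contra hne
  have huS : u ∈ S := by simp [hS, htrans u y x huy hyS]
  have hlt : (Finset.univ.filter (fun w => le w u)).card
      < (Finset.univ.filter (fun w => le w y)).card := by
    apply Finset.card_lt_card
    constructor
    · intro w hw
      simp only [Finset.mem_filter, Finset.mem_univ, true_and] at hw ⊢
      exact htrans w u y hw huy
    · intro hsub
      have := hsub (by simp [hrefl] : y ∈ Finset.univ.filter (fun w => le w y))
      simp only [Finset.mem_filter, Finset.mem_univ, true_and] at this
      exact hne (hanti u y huy this)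
  exact absurd (hymin u huS) (by omega)
end Poset2

section Algebra

lemma sum_ite_unique {α β : Type*} [Fintype α] [AddCommMonoid β] (p : α → Prop)
    [DecidablePred p] [Decidable (∃ a, p a)]
    (h : ∀ a b, p a → p b → a = b) (c : β) :
    (∑ a : α, if p a then c else 0) = if ∃ a, p a then c else 0 := by
  by_cases hex : ∃ a, p a
  · obtain ⟨a₀, ha₀⟩ := hex
    rw [if_pos ⟨a₀, ha₀⟩, Finset.sum_eq_single a₀]
    · simp [ha₀]
    · intro b _ hb; rw [if_neg fun hpb => hb (h b a₀ hpb ha₀)]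
    · simp
  · rw [if_neg hex]; exact Finset.sum_eq_zero fun a _ => if_neg fun hpa => hex ⟨a, hpa⟩

lemma prod_ofFn_sum_ite {R α : Type*} [Semiring R] [Fintype α] :
    ∀ (N : ℕ) (Q : Fin N → α → Prop) [∀ x v, Decidable (Q x v)]
      [∀ c : Fin N → α, Decidable (∀ x, Q x (c x))] (g : Fin N → α → R),
    (List.ofFn fun x => ∑ v : α, if Q x v then g x v else 0).prod
      = ∑ c : Fin N → α, if ∀ x, Q x (c x) then (List.ofFn fun x => g x (c x)).prod else 0 := by
  intro N
  induction N with
  | zero => intro Q _ _ g; simp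
  | succ N ih =>
    intro Q _ _ g
    classical
    rw [List.ofFn_succ, List.prod_cons, ih (fun x => Q x.succ) (fun x => g x.succ),
      Finset.sum_mul_sum]
    rw [← (Fin.consEquiv (fun _ => α)).sum_comp (fun c => if ∀ x, Q x (c x) then (List.ofFn fun x => g x (c x)).prod else 0)]
    rw [Fintype.sum_prod_type]
    refine Finset.sum_congr rfl fun v _ => Finset.sum_congr rfl fun c _ => ?_
    have h1 : (∀ x, Q x (Fin.consEquiv (fun _ => α) (v, c) x)) ↔ Q 0 v ∧ ∀ x, Q x.succ (c x) := by
      simp [Fin.consEquiv, Fin.forall_fin_succ]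
    have h2 : (List.ofFn fun x => g x (Fin.consEquiv (fun _ => α) (v, c) x))
        = g 0 v :: List.ofFn fun x => g x.succ (c x) := by
      rw [List.ofFn_succ]; simp [Fin.consEquiv]
    rw [show (if Q 0 v then g 0 v else 0) *
        (if ∀ x, Q x.succ (c x) then (List.ofFn fun x => g x.succ (c x)).prod else 0)
        = if Q 0 v ∧ ∀ x, Q x.succ (c x) then g 0 v * (List.ofFn fun x => g x.succ (c x)).prod else 0 by
      by_cases h0 : Q 0 v <;> by_cases hs : ∀ x, Q x.succ (c x) <;>
        simp [h0, hs]]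
    exact (if_congr h1 (by rw [h2, List.prod_cons]) rfl).symm

lemma prod_map_bd (l : List (ℕ ⊕ ℕ)) :
    (l.map bd).prod = MonoidAlgebra.of ℚ (FreeMonoid (ℕ ⊕ ℕ)) (FreeMonoid.ofList l) := by
  induction l with
  | nil => exact (map_one (MonoidAlgebra.of ℚ (FreeMonoid (ℕ⊕ℕ)))).symm
  | cons a l ih =>
    rw [List.map_cons, List.prod_cons, ih, bd, ← map_mul]
    rfl

lemma ncSubst2_of (φ : ℕ⊕ℕ → NC2) (l : List (ℕ⊕ℕ)) :
    ncSubst2 φ (MonoidAlgebra.of ℚ (FreeMonoid (ℕ⊕ℕ)) (FreeMonoid.ofList l)) = (l.map φ).prod := by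
  rw [ncSubst2, MonoidAlgebra.lift_of, FreeMonoid.lift_apply, FreeMonoid.toList_ofList]

lemma ncSubst2_ncN {n : ℕ} (le : Fin n → Fin n → Prop) (ht : Fin n → ℕ) (m : ℕ)
    (φ : ℕ⊕ℕ → NC2) :
    ncSubst2 φ (ncN le ht m) = ∑ r : Fin n → Fin (m + 1),
      if NCOrderCond le ht r ∧ ∀ i, Odd (ht i) → (r i : ℕ) < m then
        (List.ofFn fun x => φ (if Even (ht x) then Sum.inl (r x : ℕ) else Sum.inr (r x : ℕ))).prod
      else 0 := by
  rw [ncN, map_sum]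
  refine Finset.sum_congr rfl fun r _ => ?_
  rw [apply_ite (ncSubst2 φ), map_zero, ncSubst2_of, List.map_ofFn]
  rfl

end Algebra

section Reduce
variable {n : ℕ}

lemma prod_ofFn_bd {N : ℕ} (t : Fin N → ℕ⊕ℕ) :
    (List.ofFn fun x => bd (t x)).prod
      = MonoidAlgebra.of ℚ (FreeMonoid (ℕ⊕ℕ)) (FreeMonoid.ofList (List.ofFn t)) := by
  rw [← prod_map_bd, List.map_ofFn]
  rfl

lemma fin_sum_ite_single {N : ℕ} {β : Type*} [AddCommMonoid β] (P : Fin N → Prop)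
    [DecidablePred P]
    (f : Fin N → β) (v₀ : Fin N) (h : ∀ v, P v ↔ v = v₀) :
    (∑ v : Fin N, if P v then f v else 0) = f v₀ := by
  have : ∀ v : Fin N, (if P v then f v else 0) = if v = v₀ then f v else 0 :=
    fun v => if_congr (h v) rfl rfl
  rw [Finset.sum_congr rfl (fun v _ => this v), Finset.sum_ite_eq' Finset.univ v₀ f,
    if_pos (Finset.mem_univ v₀)]

lemma fin_sum_ite_pair {N : ℕ} {β : Type*} [AddCommMonoid β] (P : Fin N → Prop)
    [DecidablePred P]
    (f : Fin N → β) (v₀ v₁ : Fin N) (hne : v₀ ≠ v₁) (h : ∀ v, P v ↔ v = v₀ ∨ v = v₁) :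
    (∑ v : Fin N, if P v then f v else 0) = f v₀ + f v₁ := by
  have : ∀ v : Fin N, (if P v then f v else 0)
      = (if v = v₀ then f v else 0) + (if v = v₁ then f v else 0) := by
    intro v
    by_cases h0 : v = v₀
    · rw [h0, if_pos ((h v₀).2 (Or.inl rfl)), if_pos rfl, if_neg hne, add_zero]
    by_cases h1 : v = v₁
    · rw [h1, if_pos ((h v₁).2 (Or.inr rfl)), if_neg (h1 ▸ h0 : v₁ ≠ v₀), if_pos rfl, zero_add]
    · rw [if_neg (fun hp => by rcases (h v).1 hp with h'|h' <;> [exact h0 h'; exact h1 h']),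
        if_neg h0, if_neg h1, add_zero]
  rw [Finset.sum_congr rfl (fun v _ => this v), Finset.sum_add_distrib,
    Finset.sum_ite_eq' Finset.univ v₀ f, Finset.sum_ite_eq' Finset.univ v₁ f,
    if_pos (Finset.mem_univ v₀), if_pos (Finset.mem_univ v₁)]

/-- LHS reduction: substitution that kills letters in `K` and fixes the rest. -/
lemma lhs_reduce (le : Fin n → Fin n → Prop) (ht : Fin n → ℕ) (m : ℕ)
    (φ : ℕ⊕ℕ → NC2) (K : ℕ⊕ℕ → Prop)
    (hφ0 : ∀ s, K s → φ s = 0) (hφ1 : ∀ s, ¬ K s → φ s = bd s) :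
    ncSubst2 φ (ncN le ht m) = ∑ r : Fin n → Fin (m + 1),
      if (NCOrderCond le ht r ∧ ∀ i, Odd (ht i) → (r i : ℕ) < m)
          ∧ ∀ x, ¬ K (if Even (ht x) then Sum.inl (r x : ℕ) else Sum.inr (r x : ℕ)) then
        MonoidAlgebra.of ℚ (FreeMonoid (ℕ⊕ℕ)) (FreeMonoid.ofList (List.ofFn fun x =>
          if Even (ht x) then (Sum.inl (r x : ℕ) : ℕ⊕ℕ) else Sum.inr (r x : ℕ)))
      else 0 := by
  rw [ncSubst2_ncN]
  refine Finset.sum_congr rfl fun r _ => ?_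
  by_cases hc : NCOrderCond le ht r ∧ ∀ i, Odd (ht i) → (r i : ℕ) < m
  · rw [if_pos hc]
    by_cases hk : ∀ x, ¬ K (if Even (ht x) then Sum.inl (r x : ℕ) else Sum.inr (r x : ℕ))
    · rw [if_pos ⟨hc, hk⟩, ← prod_ofFn_bd]
      exact congrArg _ (congrArg List.ofFn (funext fun x => hφ1 _ (hk x)))
    · rw [if_neg (fun h => hk h.2)]
      push_neg at hk
      obtain ⟨x₀, hx₀⟩ := hk
      apply List.prod_eq_zero
      rw [List.mem_ofFn]
      exact ⟨x₀, hφ0 _ hx₀⟩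
  · rw [if_neg hc, if_neg (fun h => hc h.1)]

/-- RHS reduction. -/
lemma rhs_reduce (le : Fin n → Fin n → Prop) (ht : Fin n → ℕ) (M : ℕ)
    (φ : ℕ⊕ℕ → NC2) (LE LO : ℕ → ℕ → Prop)
    [instE : ∀ (w : ℕ) (v : ℕ), Decidable (LE w v)] [instO : ∀ (w : ℕ) (v : ℕ), Decidable (LO w v)]
    (hφE : ∀ w : Fin (M + 1), φ (Sum.inl (w : ℕ))
      = ∑ v : Fin (M + 2), if LE (w : ℕ) (v : ℕ) then bd (Sum.inl (v : ℕ)) else 0)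
    (hφO : ∀ w : Fin (M + 1), φ (Sum.inr (w : ℕ))
      = ∑ v : Fin (M + 2), if LO (w : ℕ) (v : ℕ) then bd (Sum.inr (v : ℕ)) else 0)
    (hUE : ∀ v w w', LE w v → LE w' v → w = w')
    (hUO : ∀ v w w', LO w v → LO w' v → w = w') :
    ncSubst2 φ (ncN le ht M) = ∑ g : Fin n → Fin (M + 2),
      if (∃ r' : Fin n → Fin (M + 1),
          (NCOrderCond le ht r' ∧ ∀ x, Odd (ht x) → (r' x : ℕ) < M)
          ∧ ∀ x, if Even (ht x) then LE (r' x : ℕ) (g x : ℕ) else LO (r' x : ℕ) (g x : ℕ)) then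
        MonoidAlgebra.of ℚ (FreeMonoid (ℕ⊕ℕ)) (FreeMonoid.ofList (List.ofFn fun x =>
          if Even (ht x) then (Sum.inl (g x : ℕ) : ℕ⊕ℕ) else Sum.inr (g x : ℕ)))
      else 0 := by
  rw [ncSubst2_ncN]
  have step1 : ∀ r' : Fin n → Fin (M + 1),
      (List.ofFn fun x => φ (if Even (ht x) then Sum.inl (r' x : ℕ) else Sum.inr (r' x : ℕ))).prod
      = ∑ g : Fin n → Fin (M + 2),
        if (∀ x, if Even (ht x) then LE (r' x : ℕ) (g x : ℕ) else LO (r' x : ℕ) (g x : ℕ)) then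
          MonoidAlgebra.of ℚ (FreeMonoid (ℕ⊕ℕ)) (FreeMonoid.ofList (List.ofFn fun x =>
            if Even (ht x) then (Sum.inl (g x : ℕ) : ℕ⊕ℕ) else Sum.inr (g x : ℕ)))
        else 0 := by
    intro r'
    have hentry : (fun x => φ (if Even (ht x) then Sum.inl (r' x : ℕ) else Sum.inr (r' x : ℕ)))
        = fun x => ∑ v : Fin (M + 2),
            if (if Even (ht x) then LE (r' x : ℕ) (v : ℕ) else LO (r' x : ℕ) (v : ℕ)) then
              bd (if Even (ht x) then Sum.inl (v : ℕ) else Sum.inr (v : ℕ)) else 0 := by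
      funext x
      by_cases hx : Even (ht x) <;> simp only [hx, if_true, if_false, hφE, hφO]
    rw [hentry]
    refine (prod_ofFn_sum_ite (R := NC2) (α := Fin (M + 2)) n
      (fun x v => if Even (ht x) then LE (r' x : ℕ) (v : ℕ) else LO (r' x : ℕ) (v : ℕ))
      (fun x v => bd (if Even (ht x) then Sum.inl (v : ℕ) else Sum.inr (v : ℕ)))).trans ?_
    refine Finset.sum_congr rfl fun g _ => ?_
    refine if_congr Iff.rfl ?_ rfl
    rw [prod_ofFn_bd]
  calc ∑ r' : Fin n → Fin (M + 1),
        (if NCOrderCond le ht r' ∧ ∀ i, Odd (ht i) → (r' i : ℕ) < M then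
          (List.ofFn fun x => φ (if Even (ht x) then Sum.inl (r' x : ℕ) else Sum.inr (r' x : ℕ))).prod
        else 0)
      = ∑ r' : Fin n → Fin (M + 1), ∑ g : Fin n → Fin (M + 2),
          if (NCOrderCond le ht r' ∧ ∀ x, Odd (ht x) → (r' x : ℕ) < M)
              ∧ (∀ x, if Even (ht x) then LE (r' x : ℕ) (g x : ℕ) else LO (r' x : ℕ) (g x : ℕ)) then
            MonoidAlgebra.of ℚ (FreeMonoid (ℕ⊕ℕ)) (FreeMonoid.ofList (List.ofFn fun x =>
              if Even (ht x) then (Sum.inl (g x : ℕ) : ℕ⊕ℕ) else Sum.inr (g x : ℕ)))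
          else 0 := by
        refine Finset.sum_congr rfl fun r' _ => ?_
        by_cases hc : NCOrderCond le ht r' ∧ ∀ x, Odd (ht x) → (r' x : ℕ) < M
        · rw [if_pos hc, step1]
          exact Finset.sum_congr rfl fun g _ => if_congr (and_iff_right hc).symm rfl rfl
        · rw [if_neg hc]
          exact (Finset.sum_eq_zero fun g _ => if_neg (fun h => hc h.1)).symm
    _ = _ := by
        rw [Finset.sum_comm]
        refine Finset.sum_congr rfl fun g _ => ?_
        apply sum_ite_unique
        intro a b ha hb
        funext x
        have h1 := ha.2 x
        have h2 := hb.2 x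
        apply Fin.ext
        by_cases hx : Even (ht x) <;> simp only [hx, if_true, if_false] at h1 h2
        · exact hUE _ _ _ h1 h2
        · exact hUO _ _ _ h1 h2
end Reduce

section Lifts

/-- Lift relation: even letters, part (i). -/
def Lift1E (i w v : ℕ) : Prop :=
  (w < i ∧ v = w) ∨ (w = i ∧ (v = i ∨ v = i + 1)) ∨ (i < w ∧ v = w + 1)

/-- Lift relation: plain shift/keep (odd letters part (i), even letters part (ii)). -/
def LiftS (i w v : ℕ) : Prop := (w < i ∧ v = w) ∨ (i ≤ w ∧ v = w + 1)

/-- Lift relation: odd letters, part (ii). -/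
def Lift2O (i w v : ℕ) : Prop :=
  (w + 1 < i ∧ v = w) ∨ (w + 1 = i ∧ (v = w ∨ v = w + 1)) ∨ (i ≤ w ∧ v = w + 1)

lemma lift1E_unique (i : ℕ) : ∀ v w w', Lift1E i w v → Lift1E i w' v → w = w' := by
  intro v w w' h1 h2; unfold Lift1E at h1 h2; omega

lemma liftS_unique (i : ℕ) : ∀ v w w', LiftS i w v → LiftS i w' v → w = w' := by
  intro v w w' h1 h2; unfold LiftS at h1 h2; omega

lemma lift2O_unique (i : ℕ) : ∀ v w w', Lift2O i w v → Lift2O i w' v → w = w' := by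
  intro v w w' h1 h2; unfold Lift2O at h1 h2; omega

lemma fin_sum_ite_single' {N : ℕ} {β : Type*} [AddCommMonoid β] (P : Fin N → Prop)
    [DecidablePred P] (f : ℕ → β) (v₀ : ℕ) (hv₀ : v₀ < N)
    (h : ∀ v : Fin N, P v ↔ (v : ℕ) = v₀) :
    (∑ v : Fin N, if P v then f (v : ℕ) else 0) = f v₀ :=
  fin_sum_ite_single P (fun v => f (v : ℕ)) ⟨v₀, hv₀⟩
    (fun v => (h v).trans ⟨fun hh => Fin.ext hh, fun hh => congrArg Fin.val hh⟩)

lemma fin_sum_ite_pair' {N : ℕ} {β : Type*} [AddCommMonoid β] (P : Fin N → Prop)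
    [DecidablePred P] (f : ℕ → β) (v₀ v₁ : ℕ) (hv₀ : v₀ < N) (hv₁ : v₁ < N) (hne : v₀ ≠ v₁)
    (h : ∀ v : Fin N, P v ↔ (v : ℕ) = v₀ ∨ (v : ℕ) = v₁) :
    (∑ v : Fin N, if P v then f (v : ℕ) else 0) = f v₀ + f v₁ :=
  fin_sum_ite_pair P (fun v => f (v : ℕ)) ⟨v₀, hv₀⟩ ⟨v₁, hv₁⟩
    (fun hh => hne (congrArg Fin.val hh))
    (fun v => (h v).trans (by
      constructor
      · rintro (hh | hh)
        · exact Or.inl (Fin.ext hh)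
        · exact Or.inr (Fin.ext hh)
      · rintro (rfl | rfl)
        · exact Or.inl rfl
        · exact Or.inr rfl))

lemma sum_lift1E (M i : ℕ) (hi : i < M + 1) (emb : ℕ → ℕ ⊕ ℕ) (w : Fin (M + 1)) :
    (if (w : ℕ) < i then bd (emb (w : ℕ))
      else if (w : ℕ) = i then bd (emb i) + bd (emb (i + 1)) else bd (emb ((w : ℕ) + 1)))
    = ∑ v : Fin (M + 2), if Lift1E i (w : ℕ) (v : ℕ) then bd (emb (v : ℕ)) else 0 := by
  have hw := w.isLt
  rcases lt_trichotomy (w : ℕ) i with h | h | h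
  · rw [if_pos h]
    exact (fin_sum_ite_single' _ (fun v => bd (emb v)) (w : ℕ) (by omega)
      (fun v => by unfold Lift1E; omega)).symm
  · rw [if_neg (by omega), if_pos h]
    have := (fin_sum_ite_pair' (fun v : Fin (M+2) => Lift1E i (w : ℕ) (v : ℕ))
      (fun v => bd (emb v)) i (i + 1) (by omega) (by omega) (by omega)
      (fun v => by unfold Lift1E; omega))
    exact this.symm
  · rw [if_neg (by omega), if_neg (by omega)]
    exact (fin_sum_ite_single' _ (fun v => bd (emb v)) ((w : ℕ) + 1) (by omega)
      (fun v => by unfold Lift1E; omega)).symm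

lemma sum_liftS (M i : ℕ) (emb : ℕ → ℕ ⊕ ℕ) (w : Fin (M + 1)) :
    (if (w : ℕ) < i then bd (emb (w : ℕ)) else bd (emb ((w : ℕ) + 1)))
    = ∑ v : Fin (M + 2), if LiftS i (w : ℕ) (v : ℕ) then bd (emb (v : ℕ)) else 0 := by
  have hw := w.isLt
  rcases lt_or_ge (w : ℕ) i with h | h
  · rw [if_pos h]
    exact (fin_sum_ite_single' _ (fun v => bd (emb v)) (w : ℕ) (by omega)
      (fun v => by unfold LiftS; omega)).symm
  · rw [if_neg (by omega)]
    exact (fin_sum_ite_single' _ (fun v => bd (emb v)) ((w : ℕ) + 1) (by omega)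
      (fun v => by unfold LiftS; omega)).symm

lemma sum_lift2O (M i : ℕ) (emb : ℕ → ℕ ⊕ ℕ) (w : Fin (M + 1)) :
    (if (w : ℕ) + 1 < i then bd (emb (w : ℕ))
      else if (w : ℕ) + 1 = i then bd (emb (w : ℕ)) + bd (emb ((w : ℕ) + 1))
      else bd (emb ((w : ℕ) + 1)))
    = ∑ v : Fin (M + 2), if Lift2O i (w : ℕ) (v : ℕ) then bd (emb (v : ℕ)) else 0 := by
  have hw := w.isLt
  rcases lt_trichotomy ((w : ℕ) + 1) i with h | h | h
  · rw [if_pos h]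
    exact (fin_sum_ite_single' _ (fun v => bd (emb v)) (w : ℕ) (by omega)
      (fun v => by unfold Lift2O; omega)).symm
  · rw [if_neg (by omega), if_pos h]
    exact (fin_sum_ite_pair' (fun v : Fin (M+2) => Lift2O i (w : ℕ) (v : ℕ))
      (fun v => bd (emb v)) (w : ℕ) ((w : ℕ) + 1) (by omega) (by omega) (by omega)
      (fun v => by unfold Lift2O; omega)).symm
  · rw [if_neg (by omega), if_neg (by omega)]
    exact (fin_sum_ite_single' _ (fun v => bd (emb v)) ((w : ℕ) + 1) (by omega)
      (fun v => by unfold Lift2O; omega)).symm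

end Lifts

lemma if_congr' {α : Sort*} {p q : Prop} {h1 : Decidable p} {h2 : Decidable q} {a b : α}
    (h : p ↔ q) : (if p then a else b) = (if q then a else b) := by
  cases h1 with
  | isTrue hp => rw [if_pos hp, if_pos (h.mp hp)]
  | isFalse hp => rw [if_neg hp, if_neg (fun hq => hp (h.mpr hq))]

section Equiv
variable {n : ℕ} {le : Fin n → Fin n → Prop} {ht : Fin n → ℕ}

lemma equiv_part1 (hP : IsLRPoset le ht) (M i : ℕ) (hi : i < M + 1)
    (g : Fin n → Fin (M + 2)) :
    ((NCOrderCond le ht g ∧ ∀ x, Odd (ht x) → (g x : ℕ) < M + 1)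
      ∧ ∀ x, ¬ ((if Even (ht x) then (Sum.inl (g x : ℕ) : ℕ ⊕ ℕ) else Sum.inr (g x : ℕ))
          = Sum.inr i))
    ↔ ∃ r' : Fin n → Fin (M + 1),
        (NCOrderCond le ht r' ∧ ∀ x, Odd (ht x) → (r' x : ℕ) < M)
        ∧ ∀ x, if Even (ht x) then Lift1E i (r' x : ℕ) (g x : ℕ)
            else LiftS i (r' x : ℕ) (g x : ℕ) := by
  constructor
  · rintro ⟨⟨⟨hmono, hstrict⟩, hbound⟩, hkill⟩
    have hnk : ∀ x, ¬ Even (ht x) → (g x : ℕ) ≠ i := by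
      intro x hx h
      exact hkill x (by rw [if_neg hx, h])
    refine ⟨fun x => ⟨if (g x : ℕ) ≤ i then (g x : ℕ) else (g x : ℕ) - 1,
      by have := (g x).isLt; split <;> omega⟩, ⟨⟨?_, ?_⟩, ?_⟩, ?_⟩
    · intro x y hxy
      have h1 := Fin.le_def.1 (hmono x y hxy)
      rw [Fin.mk_le_mk]
      split_ifs <;> omega
    · intro x y hxy hne hodd
      have h1 := Fin.lt_def.1 (hstrict x y hxy hne hodd)
      have h2 := hnk x (Nat.not_even_iff_odd.mpr hodd)
      rw [Fin.mk_lt_mk]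
      split_ifs <;> omega
    · intro x hodd
      have h1 := hbound x hodd
      have h2 := hnk x (Nat.not_even_iff_odd.mpr hodd)
      show (if (g x : ℕ) ≤ i then (g x : ℕ) else (g x : ℕ) - 1) < M
      split_ifs <;> omega
    · intro x
      have hb := (g x).isLt
      by_cases hx : Even (ht x)
      · rw [if_pos hx]
        show Lift1E i (if (g x : ℕ) ≤ i then (g x : ℕ) else (g x : ℕ) - 1) (g x : ℕ)
        unfold Lift1E
        split_ifs <;> omega
      · rw [if_neg hx]
        have h2 := hnk x hx
        show LiftS i (if (g x : ℕ) ≤ i then (g x : ℕ) else (g x : ℕ) - 1) (g x : ℕ)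
        unfold LiftS
        split_ifs <;> omega
  · rintro ⟨r', ⟨⟨hmono, hstrict⟩, hbound⟩, hM⟩
    have hLE : ∀ x, Even (ht x) → Lift1E i (r' x : ℕ) (g x : ℕ) := by
      intro x hx; have := hM x; rwa [if_pos hx] at this
    have hLO : ∀ x, ¬ Even (ht x) → LiftS i (r' x : ℕ) (g x : ℕ) := by
      intro x hx; have := hM x; rwa [if_neg hx] at this
    refine ⟨⟨⟨?_, ?_⟩, ?_⟩, ?_⟩
    · -- monotone
      intro x y hxy
      rcases eq_or_ne x y with rfl | hne
      · exact le_refl _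
      have hw := Fin.le_def.1 (hmono x y hxy)
      rw [Fin.le_def]
      by_cases hx : Even (ht x)
      · by_cases hy : Even (ht y)
        · -- even-even: needs the poset
          have h1 := hLE x hx
          have h2 := hLE y hy
          by_contra hlt
          push_neg at hlt
          have hkey : (r' x : ℕ) = i ∧ (r' y : ℕ) = i ∧ (g x : ℕ) = i + 1 ∧ (g y : ℕ) = i := by
            unfold Lift1E at h1 h2; omega
          obtain ⟨z, hxz, hzy, hzx, hht⟩ := lrp_cov hP hxy hne
          have hzodd : ¬ Even (ht z) := by
            rw [hht, Nat.even_add_one]; simpa using hx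
          have hzy' : z ≠ y := fun h => hzodd (h ▸ hy)
          have h3 := Fin.le_def.1 (hmono x z hxz)
          have h4 := Fin.lt_def.1 (hstrict z y hzy hzy' (Nat.not_even_iff_odd.1 hzodd))
          omega
        · have h1 := hLE x hx
          have h2 := hLO y hy
          unfold Lift1E at h1; unfold LiftS at h2; omega
      · have hst := Fin.lt_def.1 (hstrict x y hxy hne (Nat.not_even_iff_odd.1 hx))
        have h1 := hLO x hx
        unfold LiftS at h1
        by_cases hy : Even (ht y)
        · have h2 := hLE y hy; unfold Lift1E at h2; omega
        · have h2 := hLO y hy; unfold LiftS at h2; omega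
    · -- strict
      intro x y hxy hne hodd
      have hx := Nat.not_even_iff_odd.mpr hodd
      have hw := Fin.lt_def.1 (hstrict x y hxy hne hodd)
      rw [Fin.lt_def]
      have h1 := hLO x hx
      unfold LiftS at h1
      by_cases hy : Even (ht y)
      · have h2 := hLE y hy; unfold Lift1E at h2; omega
      · have h2 := hLO y hy; unfold LiftS at h2; omega
    · -- bound
      intro x hodd
      have hx := Nat.not_even_iff_odd.mpr hodd
      have h1 := hLO x hx
      have h2 := hbound x hodd
      unfold LiftS at h1; omega
    · -- no kill
      intro x
      by_cases hx : Even (ht x)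
      · rw [if_pos hx]; simp
      · rw [if_neg hx]
        have h1 := hLO x hx
        have h2 := (r' x).isLt
        unfold LiftS at h1
        simp only [Sum.inr.injEq]
        omega

lemma equiv_part2 (hP : IsLRPoset le ht) (M i : ℕ) (hi : i < M + 1)
    (g : Fin n → Fin (M + 2)) :
    ((NCOrderCond le ht g ∧ ∀ x, Odd (ht x) → (g x : ℕ) < M + 1)
      ∧ ∀ x, ¬ ((if Even (ht x) then (Sum.inl (g x : ℕ) : ℕ ⊕ ℕ) else Sum.inr (g x : ℕ))
          = Sum.inl i))
    ↔ ∃ r' : Fin n → Fin (M + 1),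
        (NCOrderCond le ht r' ∧ ∀ x, Odd (ht x) → (r' x : ℕ) < M)
        ∧ ∀ x, if Even (ht x) then LiftS i (r' x : ℕ) (g x : ℕ)
            else Lift2O i (r' x : ℕ) (g x : ℕ) := by
  constructor
  · rintro ⟨⟨⟨hmono, hstrict⟩, hbound⟩, hkill⟩
    have hnk : ∀ x, Even (ht x) → (g x : ℕ) ≠ i := by
      intro x hx h
      exact hkill x (by rw [if_pos hx, h])
    have hfact : ∀ x, ¬ Even (ht x) → (g x : ℕ) = i → 1 ≤ i := by
      intro x hx hgi
      by_contra hi0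
      obtain ⟨y, hyx, hy0⟩ := lrp_min_below hP x
      have hyne : y ≠ x := by
        intro h; rw [h] at hy0; rw [hy0] at hx; exact hx (Even.zero)
      have h1 := Fin.le_def.1 (hmono y x hyx)
      have h2 := hnk y (by rw [hy0]; exact Even.zero)
      omega
    refine ⟨fun x => ⟨if (g x : ℕ) < i then (g x : ℕ) else (g x : ℕ) - 1,
      by have := (g x).isLt; split <;> omega⟩, ⟨⟨?_, ?_⟩, ?_⟩, ?_⟩
    · intro x y hxy
      have h1 := Fin.le_def.1 (hmono x y hxy)
      rw [Fin.mk_le_mk]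
      split_ifs <;> omega
    · -- strictness of r' : needs the poset in the pivot case
      intro x y hxy hne hodd
      have hx := Nat.not_even_iff_odd.mpr hodd
      have h1 := Fin.lt_def.1 (hstrict x y hxy hne hodd)
      have h2 := hfact x hx
      rw [Fin.mk_lt_mk]
      by_contra hcon
      have hkey : (g x : ℕ) + 1 = i ∧ (g y : ℕ) = i := by
        split_ifs at hcon <;> omega
      by_cases hy : Even (ht y)
      · exact hnk y hy hkey.2
      · obtain ⟨z, hxz, hzy, hzx, hht⟩ := lrp_cov hP hxy hne
        have hzeven : Even (ht z) := by
          rw [hht, Nat.even_add_one]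
          exact hx
        have hzy' : z ≠ y := fun h => hy (h ▸ hzeven)
        have h3 := Fin.lt_def.1 (hstrict x z hxz (fun h => hzx h.symm) hodd)
        have h4 := Fin.le_def.1 (hmono z y hzy)
        have h5 := hnk z hzeven
        omega
    · intro x hodd
      have hx := Nat.not_even_iff_odd.mpr hodd
      have h1 := hbound x hodd
      have h2 := hfact x hx
      show (if (g x : ℕ) < i then (g x : ℕ) else (g x : ℕ) - 1) < M
      split_ifs <;> omega
    · intro x
      have hb := (g x).isLt
      by_cases hx : Even (ht x)
      · rw [if_pos hx]
        have h2 := hnk x hx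
        show LiftS i (if (g x : ℕ) < i then (g x : ℕ) else (g x : ℕ) - 1) (g x : ℕ)
        unfold LiftS
        split_ifs <;> omega
      · rw [if_neg hx]
        have h2 := hfact x hx
        show Lift2O i (if (g x : ℕ) < i then (g x : ℕ) else (g x : ℕ) - 1) (g x : ℕ)
        unfold Lift2O
        split_ifs <;> omega
  · rintro ⟨r', ⟨⟨hmono, hstrict⟩, hbound⟩, hM⟩
    have hLE : ∀ x, Even (ht x) → LiftS i (r' x : ℕ) (g x : ℕ) := by
      intro x hx; have := hM x; rwa [if_pos hx] at this
    have hLO : ∀ x, ¬ Even (ht x) → Lift2O i (r' x : ℕ) (g x : ℕ) := by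
      intro x hx; have := hM x; rwa [if_neg hx] at this
    refine ⟨⟨⟨?_, ?_⟩, ?_⟩, ?_⟩
    · intro x y hxy
      rcases eq_or_ne x y with rfl | hne
      · exact le_refl _
      have hw := Fin.le_def.1 (hmono x y hxy)
      rw [Fin.le_def]
      by_cases hx : Even (ht x)
      · have h1 := hLE x hx
        unfold LiftS at h1
        by_cases hy : Even (ht y)
        · have h2 := hLE y hy; unfold LiftS at h2; omega
        · have h2 := hLO y hy; unfold Lift2O at h2; omega
      · have hst := Fin.lt_def.1 (hstrict x y hxy hne (Nat.not_even_iff_odd.1 hx))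
        have h1 := hLO x hx
        unfold Lift2O at h1
        by_cases hy : Even (ht y)
        · have h2 := hLE y hy; unfold LiftS at h2; omega
        · have h2 := hLO y hy; unfold Lift2O at h2; omega
    · intro x y hxy hne hodd
      have hx := Nat.not_even_iff_odd.mpr hodd
      have hw := Fin.lt_def.1 (hstrict x y hxy hne hodd)
      rw [Fin.lt_def]
      have h1 := hLO x hx
      unfold Lift2O at h1
      by_cases hy : Even (ht y)
      · have h2 := hLE y hy; unfold LiftS at h2; omega
      · have h2 := hLO y hy; unfold Lift2O at h2; omega
    · intro x hodd
      have hx := Nat.not_even_iff_odd.mpr hodd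
      have h1 := hLO x hx
      have h2 := hbound x hodd
      unfold Lift2O at h1; omega
    · intro x
      by_cases hx : Even (ht x)
      · rw [if_pos hx]
        have h1 := hLE x hx
        have h2 := (r' x).isLt
        unfold LiftS at h1
        simp only [Sum.inl.injEq]
        omega
      · rw [if_neg hx]; simp

end Equiv


/-- For a labeled ranked poset `P` on `n` elements, (paper) `m ≥ 1` and
`1 ≤ i ≤ m` (here `i` is 0-indexed, so `i < m`): (i) sending `d_{i+1}` to `0` in `𝐍_P^(m)`
equals the image of `𝐍_P^(m-1)` under `b_{i+1} ↦ b_{i+1} + b_{i+2}` with later `b`'s and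
the `d`'s from index `i+1` on shifted up; (ii) sending `b_{i+1}` to `0` in `𝐍_P^(m)` equals
the image of `𝐍_P^(m-1)` under shifting the `b`'s from index `i+1` up, `d_i ↦ d_i + d_{i+1}`
and shifting the later `d`'s up (for `i = 0`, all variables are shifted up by one). -/
theorem stmt13 (n : ℕ) (le : Fin n → Fin n → Prop) (ht : Fin n → ℕ)
    (hP : IsLRPoset le ht) (m i : ℕ) (hm : 1 ≤ m) (hi : i < m) :
    (ncSubst2 (Sum.elim (fun j => bd (Sum.inl j))
        (fun j => if j = i then 0 else bd (Sum.inr j)))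
      (ncN le ht m) =
      ncSubst2 (Sum.elim
        (fun j => if j < i then bd (Sum.inl j)
          else if j = i then bd (Sum.inl i) + bd (Sum.inl (i + 1)) else bd (Sum.inl (j + 1)))
        (fun j => if j < i then bd (Sum.inr j) else bd (Sum.inr (j + 1))))
      (ncN le ht (m - 1))) ∧
    (ncSubst2 (Sum.elim (fun j => if j = i then 0 else bd (Sum.inl j))
        (fun j => bd (Sum.inr j)))
      (ncN le ht m) =
      ncSubst2 (Sum.elim
        (fun j => if j < i then bd (Sum.inl j) else bd (Sum.inl (j + 1)))
        (fun j => if j + 1 < i then bd (Sum.inr j)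
          else if j + 1 = i then bd (Sum.inr j) + bd (Sum.inr (j + 1))
          else bd (Sum.inr (j + 1))))
      (ncN le ht (m - 1))) := by
  obtain ⟨M, rfl⟩ := Nat.exists_eq_succ_of_ne_zero (Nat.one_le_iff_ne_zero.mp hm)
  simp only [Nat.succ_sub_one]
  constructor
  · rw [lhs_reduce le ht (M + 1) _ (fun s => s = Sum.inr i) ?h0 ?h1,
      rhs_reduce le ht M _ (Lift1E i) (LiftS i) ?hE ?hO (lift1E_unique i) (liftS_unique i)]
    case h0 => rintro s rfl; simp
    case h1 =>
      intro s hs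
      rcases s with j | j
      · rfl
      · simp only [Sum.elim_inr]
        rw [if_neg (fun h => hs (by rw [h]))]
    case hE => intro w; exact sum_lift1E M i (by omega) Sum.inl w
    case hO => intro w; exact sum_liftS M i Sum.inr w
    exact Finset.sum_congr rfl fun g _ => if_congr' (equiv_part1 hP M i (by omega) g)
  · rw [lhs_reduce le ht (M + 1) _ (fun s => s = Sum.inl i) ?h0 ?h1,
      rhs_reduce le ht M _ (LiftS i) (Lift2O i) ?hE ?hO (liftS_unique i) (lift2O_unique i)]
    case h0 => rintro s rfl; simp
    case h1 =>
      intro s hs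
      rcases s with j | j
      · simp only [Sum.elim_inl]
        rw [if_neg (fun h => hs (by rw [h]))]
      · rfl
    case hE => intro w; exact sum_liftS M i Sum.inl w
    case hO => intro w; exact sum_lift2O M i Sum.inr w
    exact Finset.sum_congr rfl fun g _ => if_congr' (equiv_part2 hP M i (by omega) g)
end
end

section
/- Fix n ≥ 1 and an integer m ≥ n. The family (𝐍_{P_K}^(m)), where K ranges over all set compositions of {1,…,n}, is linearly independent over ℚ in the free ℚ-algebra on noncommuting generators b₁,…,b_{m+1},d₁,…,d_m. -/
open scoped Classical

noncomputable section

namespace Stmt14Aux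

lemma ht_surj {n : ℕ} (K : SetComp n) {a : ℕ} (ha : a < (K.1.1 : ℕ)) :
    ∃ x, K.ht x = a := by
  obtain ⟨x, hx⟩ := K.2 ⟨a, ha⟩
  exact ⟨x, by simp [SetComp.ht, hx]⟩

lemma ht_lt {n : ℕ} (K : SetComp n) (x : Fin n) : K.ht x < (K.1.1 : ℕ) := (K.1.2 x).isLt

lemma ht_lt_n {n : ℕ} (K : SetComp n) (x : Fin n) : K.ht x < n := by
  have h1 := ht_lt K x
  have h2 : (K.1.1 : ℕ) < n + 1 := K.1.1.isLt
  omega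

lemma ext_ht {n : ℕ} (K K' : SetComp n) (h : ∀ i, K.ht i = K'.ht i) : K = K' := by
  have hll : (K.1.1 : ℕ) = (K'.1.1 : ℕ) := by
    rcases Nat.lt_or_ge (K.1.1 : ℕ) (K'.1.1 : ℕ) with hlt | hge
    · obtain ⟨x, hx⟩ := ht_surj K' (a := (K.1.1 : ℕ)) hlt
      have h1 := ht_lt K x
      have h2 := h x
      omega
    · rcases Nat.eq_or_lt_of_le hge with he | hlt
      · omega
      · obtain ⟨x, hx⟩ := ht_surj K (a := (K'.1.1 : ℕ)) hlt
        have h1 := ht_lt K' x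
        have h2 := h x
        omega
  obtain ⟨⟨ℓ, f⟩, hf⟩ := K
  obtain ⟨⟨ℓ', f'⟩, hf'⟩ := K'
  have hℓ : ℓ = ℓ' := Fin.ext hll
  subst hℓ
  apply Subtype.ext
  exact congrArg (Sigma.mk ℓ) (funext fun i => Fin.ext (h i))

/-- The main combinatorial lemma: a parity-compatible ranking satisfying the order
conditions of `K'` with values `K.ht` forces `K'.ht = K.ht`. -/
lemma ht_eq_of_cond {n : ℕ} (K K' : SetComp n)
    (hpar : ∀ i, Even (K'.ht i) ↔ Even (K.ht i))
    (h2 : ∀ x y, K'.ht x < K'.ht y → K.ht x ≤ K.ht y)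
    (h3 : ∀ x y, K'.ht x < K'.ht y → Odd (K'.ht x) → K.ht x < K.ht y) :
    ∀ i, K'.ht i = K.ht i := by
  have hpar' : ∀ i, K'.ht i % 2 = K.ht i % 2 := by
    intro i
    have := hpar i
    rw [Nat.even_iff, Nat.even_iff] at this
    omega
  have step1 : ∀ x y, K'.ht x < K'.ht y → K.ht x < K.ht y := by
    intro x y hxy
    rcases Nat.even_or_odd (K'.ht x) with hev | hod
    · rcases Nat.eq_or_lt_of_le (Nat.succ_le_of_lt hxy) with he | hlt
      · have h1 : K.ht x ≤ K.ht y := h2 x y hxy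
        have p1 := hpar' x
        have p2 := hpar' y
        rw [Nat.even_iff] at hev
        omega
      · have hz : K'.ht x + 1 < (K'.1.1 : ℕ) := lt_trans hlt (ht_lt K' y)
        obtain ⟨z, hz'⟩ := ht_surj K' hz
        have hodz : Odd (K'.ht z) := by rw [hz']; exact Even.add_one hev
        have l1 : K.ht x ≤ K.ht z := h2 x z (by omega)
        have l2 : K.ht z < K.ht y := h3 z y (by omega) hodz
        omega
    · exact h3 x y hxy hod
  suffices H : ∀ k, ∀ x, K.ht x = k → K'.ht x = k by
    intro i; exact H (K.ht i) i rfl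
  intro k
  induction k with
  | zero =>
    intro x hx
    by_contra h0
    obtain ⟨z, hz⟩ := ht_surj K' (a := K'.ht x - 1) (by have := ht_lt K' x; omega)
    have := step1 z x (by omega)
    omega
  | succ k ih =>
    intro x hx
    obtain ⟨y, hy⟩ := ht_surj K (a := k) (by have := ht_lt K x; omega)
    have hy' : K'.ht y = k := ih y hy
    have hgt : k < K'.ht x := by
      rcases Nat.lt_or_ge k (K'.ht x) with h | h
      · exact h
      rcases Nat.eq_or_lt_of_le h with he | hlt
      · have p := hpar' x
        omega
      · have := step1 x y (by omega)
        omega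
    rcases Nat.eq_or_lt_of_le (Nat.succ_le_of_lt hgt) with he | hlt
    · omega
    · obtain ⟨z, hz⟩ := ht_surj K' (a := k + 1) (lt_trans hlt (ht_lt K' x))
      have a1 := step1 y z (by omega)
      have a2 := step1 z x (by omega)
      omega

/-- The distinguished word associated with a set composition. -/
def wordK {n : ℕ} (K : SetComp n) : FreeMonoid (ℕ ⊕ ℕ) :=
  FreeMonoid.ofList (List.ofFn fun i =>
    if Even (K.ht i) then (Sum.inl (K.ht i) : ℕ ⊕ ℕ) else Sum.inr (K.ht i))

/-- The canonical ranking `r₀` for a set composition. -/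
def r0 {n m : ℕ} (hm : n ≤ m) (K : SetComp n) (i : Fin n) : Fin (m + 1) :=
  ⟨K.ht i, by have := ht_lt_n K i; omega⟩

lemma key {n m : ℕ} (hm : n ≤ m) (K K' : SetComp n) (r : Fin n → Fin (m + 1)) :
    ((NCOrderCond K'.le K'.ht r ∧ ∀ i, Odd (K'.ht i) → (r i : ℕ) < m) ∧
      FreeMonoid.ofList (List.ofFn fun i =>
        if Even (K'.ht i) then (Sum.inl (r i : ℕ) : ℕ ⊕ ℕ) else Sum.inr (r i : ℕ))
        = wordK K)
    ↔ (K' = K ∧ r = r0 hm K) := by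
  constructor
  · rintro ⟨⟨hcond, _hlt⟩, hw⟩
    have hfun := (List.ofFn_inj).mp (FreeMonoid.ofList.injective hw)
    have hpt : ∀ i, (if Even (K'.ht i) then (Sum.inl (r i : ℕ) : ℕ ⊕ ℕ) else Sum.inr (r i : ℕ))
        = (if Even (K.ht i) then (Sum.inl (K.ht i) : ℕ ⊕ ℕ) else Sum.inr (K.ht i)) :=
      fun i => congrFun hfun i
    have hpar : ∀ i, Even (K'.ht i) ↔ Even (K.ht i) := by
      intro i
      have := hpt i
      by_cases h1 : Even (K'.ht i) <;> by_cases h2 : Even (K.ht i) <;>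
        simp [h1, h2] at this ⊢
    have hval : ∀ i, (r i : ℕ) = K.ht i := by
      intro i
      have hp := hpt i
      have := hpar i
      by_cases h1 : Even (K'.ht i) <;> by_cases h2 : Even (K.ht i) <;>
        simp [h1, h2] at hp this ⊢ <;> tauto
    have hblock : ∀ x y : Fin n, K'.ht x < K'.ht y → K'.1.2 x < K'.1.2 y := by
      intro x y h
      exact h
    have h2 : ∀ x y, K'.ht x < K'.ht y → K.ht x ≤ K.ht y := by
      intro x y h
      have := hcond.1 x y (Or.inr (hblock x y h))
      rw [Fin.le_def] at this
      rw [← hval x, ← hval y]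
      exact this
    have h3 : ∀ x y, K'.ht x < K'.ht y → Odd (K'.ht x) → K.ht x < K.ht y := by
      intro x y h hodd
      have hne : x ≠ y := by
        intro he; subst he; exact lt_irrefl _ h
      have := hcond.2 x y (Or.inr (hblock x y h)) hne hodd
      rw [Fin.lt_def] at this
      rw [← hval x, ← hval y]
      exact this
    have heq := ht_eq_of_cond K K' hpar h2 h3
    refine ⟨ext_ht K' K heq, funext fun i => Fin.ext ?_⟩
    simp [r0, hval i]
  · rintro ⟨hK, hr⟩
    subst hK
    subst hr
    have hlt : ∀ x y : Fin n, K'.1.2 x < K'.1.2 y → (r0 hm K' x : ℕ) < (r0 hm K' y : ℕ) := by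
      intro x y h
      exact h
    refine ⟨⟨⟨?_, ?_⟩, ?_⟩, ?_⟩
    · rintro x y (rfl | h)
      · exact le_refl _
      · exact le_of_lt ((Fin.lt_def).mpr (hlt x y h))
    · rintro x y (rfl | h) hne _
      · exact absurd rfl hne
      · exact (Fin.lt_def).mpr (hlt x y h)
    · intro i _
      have := ht_lt_n K' i
      simp only [r0]
      omega
    · simp [wordK, r0]

lemma coeff {n m : ℕ} (hm : n ≤ m) (K K' : SetComp n) :
    ((Finsupp.lapply (wordK K)).comp (MonoidAlgebra.coeffLinearEquiv ℚ).toLinearMap : NC2 →ₗ[ℚ] ℚ) (ncN K'.le K'.ht m)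
      = if K' = K then 1 else 0 := by
  rw [ncN, map_sum]
  have hterm : ∀ r : Fin n → Fin (m + 1),
      ((Finsupp.lapply (wordK K)).comp (MonoidAlgebra.coeffLinearEquiv ℚ).toLinearMap : NC2 →ₗ[ℚ] ℚ)
        (if NCOrderCond K'.le K'.ht r ∧ ∀ i, Odd (K'.ht i) → (r i : ℕ) < m then
          MonoidAlgebra.of ℚ (FreeMonoid (ℕ ⊕ ℕ)) (FreeMonoid.ofList (List.ofFn fun i =>
            if Even (K'.ht i) then (Sum.inl (r i : ℕ) : ℕ ⊕ ℕ) else Sum.inr (r i : ℕ)))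
        else 0)
      = if K' = K ∧ r = r0 hm K then 1 else 0 := by
    intro r
    by_cases h1 : NCOrderCond K'.le K'.ht r ∧ ∀ i, Odd (K'.ht i) → (r i : ℕ) < m
    · rw [if_pos h1]
      rw [MonoidAlgebra.of_apply]
      simp only [LinearMap.comp_apply, LinearEquiv.coe_coe, MonoidAlgebra.coeffLinearEquiv_apply,
        MonoidAlgebra.coeff_single, Finsupp.lapply_apply]
      by_cases h2 : FreeMonoid.ofList (List.ofFn fun i =>
          if Even (K'.ht i) then (Sum.inl (r i : ℕ) : ℕ ⊕ ℕ) else Sum.inr (r i : ℕ)) = wordK K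
      · rw [Finsupp.single_apply, if_pos h2, if_pos ((key hm K K' r).mp ⟨h1, h2⟩)]
      · rw [Finsupp.single_apply, if_neg h2, if_neg]
        intro hc
        exact h2 ((key hm K K' r).mpr hc).2
    · rw [if_neg h1, map_zero, if_neg]
      intro hc
      exact h1 ((key hm K K' r).mpr hc).1
  rw [Finset.sum_congr rfl fun r _ => hterm r]
  by_cases hK : K' = K
  · simp only [hK, true_and]
    rw [Finset.sum_ite_eq' Finset.univ (r0 hm K) (fun _ => (1 : ℚ))]
    simp
  · simp [hK]

end Stmt14Aux

/-- Fix `n ≥ 1` and `m ≥ n`.  The family `(𝐍_{P_K}^(m))`, where `K`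
ranges over the set compositions of `{1,…,n}`, is linearly independent over `ℚ`. -/
theorem stmt14 (n m : ℕ) (hn : 1 ≤ n) (hm : n ≤ m) :
    LinearIndependent ℚ (fun K : SetComp n => ncN K.le K.ht m) := by
  rw [Fintype.linearIndependent_iff]
  intro g hg K
  have h0 : ((Finsupp.lapply (Stmt14Aux.wordK K)).comp (MonoidAlgebra.coeffLinearEquiv ℚ).toLinearMap : NC2 →ₗ[ℚ] ℚ)
      (∑ K' : SetComp n, g K' • ncN K'.le K'.ht m) = 0 := by
    rw [hg, map_zero]
  rw [map_sum] at h0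
  simp only [map_smul, Stmt14Aux.coeff hm, smul_eq_mul, mul_ite, mul_one, mul_zero] at h0
  rwa [Finset.sum_ite_eq' Finset.univ K g, if_pos (Finset.mem_univ K)] at h0
end
end
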